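/- arXiv:0803.3335 — 3 statements merged into one kernel-verified Lean document; each statement's English description precedes it below -/
import Mathlib

section
/- If w is a permutation in S_n, j satisfies 2 ≤ j ≤ n-1, and w(j-1) lies strictly between w(j) and w(j+1), then w and the permutation w' obtained from w by swapping the values in positions j and j+1 have the same Robinson–Schensted insertion tableau (left tableau). -/
/-- The symmetric group `S_n`, realized as permutations of `ℤ` fixing everything
outside `{1, …, n}`. -/
def Sgrp (n : ℕ) : Set (Equiv.Perm ℤ) :=
  {w | ∀ i : ℤ, (i < 1 ∨ (n : ℤ) < i) → w i = i}

/-- The simple transposition `s_j` swapping `j` and `j+1`. -/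
def aswap (j : ℕ) : Equiv.Perm ℤ := Equiv.swap (j : ℤ) ((j : ℤ) + 1)

/-- Coxeter length on `S_n` with respect to the adjacent transpositions
`s_1, …, s_{n-1}`: minimal length of a word in these generators. -/
noncomputable def lenA (n : ℕ) (w : Equiv.Perm ℤ) : ℕ :=
  sInf {k | ∃ l : List (Equiv.Perm ℤ), l.length = k ∧
    (∀ g ∈ l, ∃ j : ℕ, 1 ≤ j ∧ j < n ∧ g = aswap j) ∧ l.prod = w}

/-- Row insertion: insert `x` into a row, returning the new row and the bumped
entry (if any). For distinct entries: `x` replaces the leftmost entry `> x`. -/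
def insertRow (x : ℕ) : List ℕ → List ℕ × Option ℕ
  | [] => ([x], none)
  | y :: ys =>
    if x < y then (x :: ys, some y)
    else (y :: (insertRow x ys).1, (insertRow x ys).2)

/-- Schensted insertion of `x` into a tableau given as its list of rows. -/
def insertTab : List (List ℕ) → ℕ → List (List ℕ)
  | [], x => [[x]]
  | row :: rest, x =>
    match insertRow x row with
    | (r, none) => r :: rest
    | (r, some y) => r :: insertTab rest y

/-- The Robinson–Schensted insertion (left) tableau `P(w)` of a word. -/
def Ptab (l : List ℕ) : List (List ℕ) := l.foldl insertTab []

/-- One-line notation `(w(1), …, w(n))` of a permutation in `S_n`. -/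
def oneLine (n : ℕ) (w : Equiv.Perm ℤ) : List ℕ :=
  (List.range' 1 n).map (fun j => (w (j : ℤ)).toNat)

lemma insertRow_append (x : ℕ) (s r : List ℕ) (h : ∀ z ∈ s, ¬ x < z) :
    insertRow x (s ++ r) = (s ++ (insertRow x r).1, (insertRow x r).2) := by
  induction s with
  | nil => simp
  | cons z s ih =>
    simp only [List.cons_append, insertRow, if_neg (h z (by simp))]
    rw [ih (fun z hz => h z (by simp [hz]))]

lemma insertRow_of_all (x : ℕ) (r : List ℕ) (h : ∀ y ∈ r, ¬ x < y) :
    insertRow x r = (r ++ [x], none) := by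
  have := insertRow_append x r [] h
  simpa [insertRow] using this

lemma insertRow_cases (x : ℕ) (r : List ℕ) :
    ((∀ y ∈ r, ¬ x < y) ∧ insertRow x r = (r ++ [x], none)) ∨
    (∃ s₁ y s₂, r = s₁ ++ y :: s₂ ∧ (∀ z ∈ s₁, ¬ x < z) ∧ x < y ∧
      insertRow x r = (s₁ ++ x :: s₂, some y)) := by
  induction r with
  | nil => left; exact ⟨by simp, by simp [insertRow]⟩
  | cons z r ih =>
    by_cases h : x < z
    · right; exact ⟨[], z, r, by simp, by simp, h, by simp [insertRow, h]⟩
    · rcases ih with ⟨h1, h2⟩ | ⟨s₁, y, s₂, hr, hs, hxy, heq⟩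
      · left
        refine ⟨?_, by simp [insertRow, h, h2]⟩
        intro y hy
        rcases List.mem_cons.1 hy with rfl | hy
        · exact h
        · exact h1 y hy
      · right
        refine ⟨z :: s₁, y, s₂, by simp [hr], ?_, hxy, by simp [insertRow, h, heq]⟩
        intro u hu
        rcases List.mem_cons.1 hu with rfl | hu
        · exact h
        · exact hs u hu

lemma insertTab_cons_none {x : ℕ} {row r' : List ℕ} (rest : List (List ℕ))
    (h : insertRow x row = (r', none)) :
    insertTab (row :: rest) x = r' :: rest := by
  simp [insertTab, h]

lemma insertTab_cons_some {x y : ℕ} {row r' : List ℕ} (rest : List (List ℕ))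
    (h : insertRow x row = (r', some y)) :
    insertTab (row :: rest) x = r' :: insertTab rest y := by
  simp [insertTab, h]

lemma entries_insertTab (T : List (List ℕ)) (x : ℕ) :
    ((insertTab T x).flatten : Multiset ℕ) = x ::ₘ (T.flatten : Multiset ℕ) := by
  induction T generalizing x with
  | nil => simp [insertTab]
  | cons row rest ih =>
    rcases insertRow_cases x row with ⟨h1, h2⟩ | ⟨s₁, y, s₂, hr, hs, hxy, heq⟩
    · rw [insertTab_cons_none rest h2]
      simp only [List.flatten_cons, ← Multiset.coe_add, ← Multiset.cons_coe,
        ← Multiset.singleton_add, Multiset.coe_singleton]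
      simp only [Multiset.coe_nil, add_zero]; abel
    · rw [insertTab_cons_some rest heq]
      simp only [List.flatten_cons, ih, hr, ← Multiset.coe_add, ← Multiset.cons_coe,
        ← Multiset.singleton_add, Multiset.coe_singleton]
      abel

lemma mem_flatten_insertTab {T : List (List ℕ)} {x z : ℕ}
    (hz : z ∈ (insertTab T x).flatten) : z = x ∨ z ∈ T.flatten := by
  have : z ∈ ((insertTab T x).flatten : Multiset ℕ) := by simpa using hz
  rw [entries_insertTab] at this
  simpa using this

lemma nodup_flatten_insertTab {T : List (List ℕ)} {x : ℕ}
    (hnd : T.flatten.Nodup) (hx : x ∉ T.flatten) : (insertTab T x).flatten.Nodup := by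
  have : ((insertTab T x).flatten : Multiset ℕ).Nodup := by
    rw [entries_insertTab]
    exact Multiset.nodup_cons.2 ⟨by simpa using hx, by simpa using hnd⟩
  simpa using this

lemma sorted_insertTab {T : List (List ℕ)} {x : ℕ}
    (hs : ∀ r ∈ T, r.Pairwise (· < ·)) (hnd : T.flatten.Nodup) (hx : x ∉ T.flatten) :
    ∀ r ∈ insertTab T x, r.Pairwise (· < ·) := by
  induction T generalizing x with
  | nil => intro r hr; simp [insertTab] at hr; simp [hr]
  | cons row rest ih =>
    have hxrow : x ∉ row := fun h => hx (by simp [h])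
    have hrowsort : row.Pairwise (· < ·) := hs row (by simp)
    have hndrest : rest.flatten.Nodup := by
      simp only [List.flatten_cons, List.nodup_append] at hnd; exact hnd.2.1
    have hdisj : ∀ z ∈ row, z ∉ rest.flatten := by
      simp only [List.flatten_cons, List.nodup_append] at hnd
      exact fun z hz hz' => hnd.2.2 z hz z hz' rfl
    rcases insertRow_cases x row with ⟨h1, h2⟩ | ⟨s₁, y, s₂, hrow, hs₁, hxy, heq⟩
    · rw [insertTab_cons_none rest h2]
      intro r hr
      rcases List.mem_cons.1 hr with rfl | hr
      · refine List.pairwise_append.2 ⟨hrowsort, by simp, ?_⟩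
        intro a ha b hb
        simp only [List.mem_singleton] at hb; subst hb
        exact lt_of_le_of_ne (not_lt.1 (h1 a ha)) (fun h => hxrow (h ▸ ha))
      · exact hs r (by simp [hr])
    · rw [insertTab_cons_some rest heq]
      intro r hr
      rcases List.mem_cons.1 hr with rfl | hr
      · subst hrow
        have h0 := List.pairwise_append.1 hrowsort
        have hys₂ : (y :: s₂).Pairwise (· < ·) := h0.2.1
        refine List.pairwise_append.2 ⟨h0.1, ?_, ?_⟩
        · exact List.pairwise_cons.2 ⟨fun b hb => lt_trans hxy ((List.pairwise_cons.1 hys₂).1 b hb),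
            (List.pairwise_cons.1 hys₂).2⟩
        · intro a ha b hb
          rcases List.mem_cons.1 hb with rfl | hb
          · exact lt_of_le_of_ne (not_lt.1 (hs₁ a ha)) (fun h => hxrow (h ▸ by simp [ha]))
          · exact h0.2.2 a ha b (by simp [hb])
      · refine ih (fun r hr => hs r (by simp [hr])) hndrest ?_ r hr
        exact hdisj y (by simp [hrow])

lemma knuth_insert : ∀ (T : List (List ℕ)),
    (∀ r ∈ T, r.Pairwise (· < ·)) → T.flatten.Nodup →
    ∀ a b c : ℕ, a < b → b < c → b ∉ T.flatten →
    insertTab (insertTab (insertTab T b) a) c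
      = insertTab (insertTab (insertTab T b) c) a := by
  intro T
  induction T with
  | nil =>
    intro _ _ a b c hab hbc _
    simp [insertTab, insertRow, hab, hbc, asymm (hab.trans hbc), asymm hbc]
  | cons row rest ih =>
    intro hsor hnd a b c hab hbc hbf
    have hrowsort : row.Pairwise (· < ·) := hsor row (by simp)
    have hbrow : b ∉ row := fun h => hbf (by simp [h])
    have hrestsort : ∀ r ∈ rest, r.Pairwise (· < ·) := fun r hr => hsor r (by simp [hr])
    have hndrest : rest.flatten.Nodup := by
      simp only [List.flatten_cons, List.nodup_append] at hnd; exact hnd.2.1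
    have hdisj : ∀ z ∈ row, z ∉ rest.flatten := by
      simp only [List.flatten_cons, List.nodup_append] at hnd
      exact fun z hz hz' => hnd.2.2 z hz z hz' rfl
    rcases insertRow_cases b row with ⟨hA, heqb⟩ | ⟨s₁, β, s₂, hrowdec, hs₁, hbβ, heqb⟩
    · -- Case A : b is appended
      have hlt : ∀ y ∈ row, y < b :=
        fun y hy => lt_of_le_of_ne (not_lt.1 (hA y hy)) (fun h => hbrow (h ▸ hy))
      rw [insertTab_cons_none rest heqb]
      rcases insertRow_cases a (row ++ [b]) with ⟨hA2, _⟩ | ⟨t₁, α, t₂, hdec, ht₁, haα, heqa⟩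
      · exact absurd hab (hA2 b (by simp))
      have hmemrb : ∀ z, z ∈ t₁ ∨ z ∈ t₂ ∨ z = α → z < b ∨ z = b := by
        intro z hz
        have hzmem : z ∈ row ++ [b] := by
          rw [hdec]; rcases hz with h | h | h <;> simp [h]
        rcases List.mem_append.1 hzmem with h | h
        · exact Or.inl (hlt z h)
        · simp at h; exact Or.inr h
      have hαb : α ≤ b := by
        rcases hmemrb α (Or.inr (Or.inr rfl)) with h | h
        · exact h.le
        · exact h.le
      have ht₁lt : ∀ z ∈ t₁, ¬ a < z := ht₁
      -- LHS
      rw [insertTab_cons_some rest heqa]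
      have hallc : ∀ y ∈ t₁ ++ a :: t₂, ¬ c < y := by
        intro y hy
        rcases List.mem_append.1 hy with h | h
        · rcases hmemrb y (Or.inl h) with h' | h' <;>
            exact not_lt.2 (le_of_lt (by omega))
        · rcases List.mem_cons.1 h with rfl | h'
          · exact not_lt.2 (le_of_lt (hab.trans hbc))
          · rcases hmemrb y (Or.inr (Or.inl h')) with h'' | h'' <;>
              exact not_lt.2 (le_of_lt (by omega))
      rw [insertTab_cons_none (insertTab rest α) (insertRow_of_all c _ hallc)]
      -- RHS
      have hallc2 : ∀ y ∈ row ++ [b], ¬ c < y := by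
        intro y hy
        rcases List.mem_append.1 hy with h | h
        · exact not_lt.2 (le_of_lt ((hlt y h).trans hbc))
        · simp at h; subst h; exact not_lt.2 hbc.le
      rw [insertTab_cons_none rest (insertRow_of_all c _ hallc2)]
      have heqa2 : insertRow a (row ++ [b] ++ [c]) = (t₁ ++ a :: (t₂ ++ [c]), some α) := by
        rw [hdec, show t₁ ++ α :: t₂ ++ [c] = t₁ ++ (α :: (t₂ ++ [c])) by simp,
          insertRow_append a t₁ _ ht₁]
        simp [insertRow, haα]
      rw [insertTab_cons_some rest heqa2]
      simp
    · -- Case B : b bumps β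
      have hs₁b : ∀ z ∈ s₁, z < b := fun z hz =>
        lt_of_le_of_ne (not_lt.1 (hs₁ z hz)) (fun h => hbrow (h ▸ by simp [hrowdec, hz]))
      have hrowfacts := List.pairwise_append.1 (hrowdec ▸ hrowsort)
      have hβs₂ : ∀ z ∈ s₂, β < z := (List.pairwise_cons.1 hrowfacts.2.1).1
      have hs₂sort : s₂.Pairwise (· < ·) := (List.pairwise_cons.1 hrowfacts.2.1).2
      have hcross : ∀ x ∈ s₁, ∀ y ∈ β :: s₂, x < y := hrowfacts.2.2
      have hrow'sort : (s₁ ++ b :: s₂).Pairwise (· < ·) := by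
        refine List.pairwise_append.2 ⟨hrowfacts.1, ?_, ?_⟩
        · exact List.pairwise_cons.2 ⟨fun z hz => hbβ.trans (hβs₂ z hz), hs₂sort⟩
        · intro x hx y hy
          rcases List.mem_cons.1 hy with rfl | hy
          · exact hs₁b x hx
          · exact hcross x hx y (by simp [hy])
      rw [insertTab_cons_some rest heqb]
      rcases insertRow_cases a (s₁ ++ b :: s₂) with ⟨hA2, _⟩ | ⟨t₁, α, t₂, hdec, ht₁, haα, heqa⟩
      · exact absurd hab (hA2 b (by simp))
      have hαb : α ≤ b := by
        have hbmem : b ∈ t₁ ++ α :: t₂ := by rw [← hdec]; simp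
        rcases List.mem_append.1 hbmem with h | h
        · exact absurd hab (not_lt.1 (ht₁ b h)).not_gt
        · rcases List.mem_cons.1 h with rfl | h
          · exact le_refl _
          · have := List.pairwise_append.1 (hdec ▸ hrow'sort)
            exact ((List.pairwise_cons.1 this.2.1).1 b h).le
      have ht₂sub : ∀ z ∈ t₂, z ∈ s₁ ++ b :: s₂ := by
        intro z hz; rw [hdec]; simp [hz]
      -- LHS so far: insertTab ((t₁ ++ a :: t₂) :: insertTab (insertTab rest β) α) c
      rw [insertTab_cons_some (insertTab rest β) heqa]
      have hpre_a : ∀ z ∈ t₁ ++ [a], ¬ c < z := by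
        intro z hz
        rcases List.mem_append.1 hz with h | h
        · have := not_lt.1 (ht₁ z h); omega
        · simp at h; subst h; exact not_lt.2 (le_of_lt (hab.trans hbc))
      have hre1 : insertRow c (t₁ ++ a :: t₂)
          = ((t₁ ++ [a]) ++ (insertRow c t₂).1, (insertRow c t₂).2) := by
        rw [show t₁ ++ a :: t₂ = (t₁ ++ [a]) ++ t₂ by simp]
        exact insertRow_append c _ _ hpre_a
      have hpre_α : ∀ z ∈ t₁ ++ [α], ¬ c < z := by
        intro z hz
        rcases List.mem_append.1 hz with h | h
        · have := not_lt.1 (ht₁ z h); omega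
        · simp at h; subst h; omega
      have hre2 : insertRow c (s₁ ++ b :: s₂)
          = ((t₁ ++ [α]) ++ (insertRow c t₂).1, (insertRow c t₂).2) := by
        rw [hdec, show t₁ ++ α :: t₂ = (t₁ ++ [α]) ++ t₂ by simp]
        exact insertRow_append c _ _ hpre_α
      rcases insertRow_cases c t₂ with ⟨hAll, heqc⟩ | ⟨u₁, γ, u₂, ht₂dec, hu₁, hcγ, heqc⟩
      · -- c appended to t₂
        rw [insertTab_cons_none (insertTab (insertTab rest β) α)
          (by rw [hre1, heqc] : insertRow c (t₁ ++ a :: t₂) = ((t₁ ++ [a]) ++ (t₂ ++ [c]), none))]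
        rw [insertTab_cons_none (insertTab rest β)
          (by rw [hre2, heqc] : insertRow c (s₁ ++ b :: s₂) = ((t₁ ++ [α]) ++ (t₂ ++ [c]), none))]
        have heqa2 : insertRow a ((t₁ ++ [α]) ++ (t₂ ++ [c]))
            = (t₁ ++ a :: (t₂ ++ [c]), some α) := by
          rw [show (t₁ ++ [α]) ++ (t₂ ++ [c]) = t₁ ++ (α :: (t₂ ++ [c])) by simp,
            insertRow_append a t₁ _ ht₁]
          simp [insertRow, haα]
        rw [insertTab_cons_some (insertTab rest β) heqa2]
        simp
      · -- c bumps γ from t₂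
        have hγmem : γ ∈ s₁ ++ b :: s₂ := ht₂sub γ (by rw [ht₂dec]; simp)
        have hβγ : β < γ := by
          have hbγ : b < γ := hbc.trans hcγ
          rcases List.mem_append.1 hγmem with h | h
          · exact absurd (hs₁b γ h) (by omega)
          · rcases List.mem_cons.1 h with h | h
            · omega
            · exact hβs₂ γ h
        have hγrow : γ ∈ row := by
          rw [hrowdec]
          rcases List.mem_append.1 hγmem with h | h
          · simp [h]
          · rcases List.mem_cons.1 h with h | h
            · exact absurd h (by omega)
            · simp [h]
        rw [insertTab_cons_some (insertTab (insertTab rest β) α)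
          (by rw [hre1, heqc] : insertRow c (t₁ ++ a :: t₂)
            = ((t₁ ++ [a]) ++ (u₁ ++ c :: u₂), some γ))]
        rw [insertTab_cons_some (insertTab rest β)
          (by rw [hre2, heqc] : insertRow c (s₁ ++ b :: s₂)
            = ((t₁ ++ [α]) ++ (u₁ ++ c :: u₂), some γ))]
        have heqa2 : insertRow a ((t₁ ++ [α]) ++ (u₁ ++ c :: u₂))
            = (t₁ ++ a :: (u₁ ++ c :: u₂), some α) := by
          rw [show (t₁ ++ [α]) ++ (u₁ ++ c :: u₂) = t₁ ++ (α :: (u₁ ++ c :: u₂)) by simp,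
            insertRow_append a t₁ _ ht₁]
          simp [insertRow, haα]
        rw [insertTab_cons_some (insertTab (insertTab rest β) γ) heqa2]
        rw [ih hrestsort hndrest α β γ (lt_of_le_of_lt hαb hbβ) hβγ (hdisj β (by simp [hrowdec]))]
        simp

lemma foldl_facts : ∀ (l : List ℕ) (T : List (List ℕ)),
    (∀ r ∈ T, r.Pairwise (· < ·)) → T.flatten.Nodup → l.Nodup →
    (∀ x ∈ l, x ∉ T.flatten) →
    (∀ r ∈ List.foldl insertTab T l, r.Pairwise (· < ·)) ∧
      (List.foldl insertTab T l).flatten.Nodup ∧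
      (∀ z ∈ (List.foldl insertTab T l).flatten, z ∈ l ∨ z ∈ T.flatten) := by
  intro l
  induction l with
  | nil => intro T h1 h2 _ _; exact ⟨h1, h2, fun z hz => Or.inr hz⟩
  | cons x l ih =>
    intro T h1 h2 hnd hfr
    have hx : x ∉ T.flatten := hfr x (by simp)
    have h1' := sorted_insertTab h1 h2 hx
    have h2' := nodup_flatten_insertTab h2 hx
    have hfr' : ∀ y ∈ l, y ∉ (insertTab T x).flatten := by
      intro y hy hmem
      rcases mem_flatten_insertTab hmem with rfl | h
      · exact (List.nodup_cons.1 hnd).1 hy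
      · exact hfr y (by simp [hy]) h
    obtain ⟨g1, g2, g3⟩ := ih (insertTab T x) h1' h2' (List.nodup_cons.1 hnd).2 hfr'
    refine ⟨by simpa using g1, by simpa using g2, ?_⟩
    intro z hz
    rcases g3 z (by simpa using hz) with h | h
    · exact Or.inl (by simp [h])
    · rcases mem_flatten_insertTab h with rfl | h
      · exact Or.inl (by simp)
      · exact Or.inr h


lemma flatten_map_single (l : List ℕ) :
    (List.map (fun a : ℕ => [(a:ℤ)]) l).flatten = List.map (fun a : ℕ => (a:ℤ)) l := by
  induction l with
  | nil => simp
  | cons x l ih => simp [ih]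

lemma oneLine_eq (n : ℕ) (w : Equiv.Perm ℤ) :
    oneLine n w = List.map (fun k : ℕ => (w ((k : ℕ) : ℤ)).toNat) (List.range' 1 n) := by
  simp only [oneLine, List.bind_eq_flatMap, List.flatMap_def, List.pure_def,
    flatten_map_single, List.map_map, Function.comp_def]

/-- Knuth relation of the first kind: if `2 ≤ j ≤ n-1` and `w(j-1)` lies strictly
between `w(j)` and `w(j+1)`, then swapping the values in positions `j` and `j+1`
preserves the Robinson–Schensted insertion tableau. -/
theorem knuth_first_kind (n : ℕ) (w : Equiv.Perm ℤ) (hw : w ∈ Sgrp n)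
    (j : ℕ) (hj1 : 2 ≤ j) (hj2 : j + 1 ≤ n)
    (hbetween : (w (j : ℤ) < w ((j : ℤ) - 1) ∧ w ((j : ℤ) - 1) < w ((j : ℤ) + 1)) ∨
      (w ((j : ℤ) + 1) < w ((j : ℤ) - 1) ∧ w ((j : ℤ) - 1) < w (j : ℤ))) :
    Ptab (oneLine n (w * aswap j)) = Ptab (oneLine n w) := by
  have hj1' : (2 : ℤ) ≤ (j : ℤ) := by exact_mod_cast hj1
  have hj2' : (j : ℤ) + 1 ≤ (n : ℤ) := by exact_mod_cast hj2
  -- values of w on [1, n] lie in [1, n]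
  have hval : ∀ i : ℤ, 1 ≤ i → i ≤ (n : ℤ) → 1 ≤ w i ∧ w i ≤ (n : ℤ) := by
    intro i h1 h2
    by_contra h
    have h' : w i < 1 ∨ (n : ℤ) < w i := by omega
    have := hw (w i) h'
    have : w i = i := w.injective this
    omega
  set f : ℕ → ℕ := fun k => (w (k : ℤ)).toNat with hf
  -- decomposition of the index range
  have hrange : List.range' 1 n
      = List.range' 1 (j-2) ++ ([j-1, j, j+1] ++ List.range' (j+2) (n-j-1)) := by
    have e3 : List.range' (j-1) 3 = [j-1, j, j+1] := by
      rw [List.range'_succ, List.range'_succ, List.range'_succ]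
      simp
      omega
    rw [← e3]
    rw [show List.range' (j+2) (n-j-1) = List.range' ((j-1) + 1*3) (n-j-1) by
      congr 1; omega]
    rw [List.range'_append]
    rw [show List.range' (j-1) (3+(n-j-1)) = List.range' (1 + 1*(j-2)) (3+(n-j-1)) by
      congr 1; omega]
    rw [List.range'_append]
    congr 1
    omega
  set u : List ℕ := (List.range' 1 (j-2)).map f with hu
  set v : List ℕ := (List.range' (j+2) (n-j-1)).map f with hv
  set B : ℕ := f (j-1) with hB
  set X : ℕ := f j with hX
  set Z : ℕ := f (j+1) with hZ
  have hone : oneLine n w = u ++ (B :: X :: Z :: v) := by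
    rw [oneLine_eq, hrange]
    simp only [List.map_append, List.map_cons]
    rfl
  -- the swapped one-line word
  have hswap_eq : ∀ k : ℕ, k ≠ j → k ≠ j + 1 →
      (w * aswap j) (k : ℤ) = w (k : ℤ) := by
    intro k hk1 hk2
    have h1 : (k : ℤ) ≠ (j : ℤ) := fun h => hk1 (by exact_mod_cast h)
    have h2 : (k : ℤ) ≠ (j : ℤ) + 1 := by
      intro h
      have : (k : ℤ) = ((j + 1 : ℕ) : ℤ) := by push_cast; omega
      exact hk2 (by exact_mod_cast this)
    rw [Equiv.Perm.mul_apply, aswap, Equiv.swap_apply_of_ne_of_ne h1 h2]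
  have hone' : oneLine n (w * aswap j) = u ++ (B :: Z :: X :: v) := by
    rw [oneLine_eq, hrange]
    simp only [List.map_append, List.map_cons, List.map_nil, List.nil_append,
      List.cons_append]
    congr 1
    · apply List.map_congr_left
      intro k hk
      rw [List.mem_range'_1] at hk
      rw [hswap_eq k (by omega) (by omega)]
    congr 1
    · rw [hswap_eq (j-1) (by omega) (by omega)]
    congr 1
    · show ((w * aswap j) ((j:ℕ) : ℤ)).toNat = Z
      rw [Equiv.Perm.mul_apply, aswap, Equiv.swap_apply_left]
      rw [show ((j:ℤ) + 1) = (((j+1 : ℕ)) : ℤ) by push_cast; ring]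
      try rfl
    congr 1
    · show ((w * aswap j) (((j+1:ℕ)) : ℤ)).toNat = X
      rw [Equiv.Perm.mul_apply, aswap]
      rw [show (((j+1:ℕ)) : ℤ) = (j:ℤ) + 1 by push_cast; ring, Equiv.swap_apply_right]
      try rfl
    · apply List.map_congr_left
      intro k hk
      rw [List.mem_range'_1] at hk
      rw [hswap_eq k (by omega) (by omega)]
  -- nodup of the one-line word
  have hmap : (List.map f (List.range' 1 n)).Nodup := by
    apply List.Nodup.map_on
    · intro x hx y hy hxy
      rw [List.mem_range'_1] at hx hy
      have hx1 := hval (x : ℤ) (by exact_mod_cast hx.1) (by exact_mod_cast (by omega : x ≤ n))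
      have hy1 := hval (y : ℤ) (by exact_mod_cast hy.1) (by exact_mod_cast (by omega : y ≤ n))
      simp only [hf] at hxy
      have : w (x : ℤ) = w (y : ℤ) := by omega
      have := w.injective this
      exact_mod_cast this
    · exact List.nodup_range' (h := Nat.one_pos)
  have hnodup : (oneLine n w).Nodup := by rw [oneLine_eq]; exact hmap
  rw [hone] at hnodup
  have hundup : u.Nodup := hnodup.of_append_left
  have hdisj := List.disjoint_of_nodup_append hnodup
  -- facts about Ptab u
  obtain ⟨hPsort, hPnodup, hPmem⟩ := foldl_facts u [] (by simp) (by simp) hundup (by simp)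
  have hPu : ∀ z, z ∈ (List.foldl insertTab [] u).flatten → z ∈ u := by
    intro z hz
    rcases hPmem z hz with h | h
    · exact h
    · simp at h
  have hBfresh : B ∉ (List.foldl insertTab [] u).flatten := fun h => hdisj (hPu B h) (by simp)
  -- relate B, X, Z to values of w
  have hcast : (((j-1 : ℕ)) : ℤ) = (j : ℤ) - 1 := by
    have : (1:ℕ) ≤ j := by omega
    push_cast [this]
    ring
  have hcast2 : (((j+1 : ℕ)) : ℤ) = (j : ℤ) + 1 := by push_cast; ring
  have hvB := hval ((j:ℤ) - 1) (by omega) (by omega)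
  have hvX := hval (j : ℤ) (by omega) (by omega)
  have hvZ := hval ((j:ℤ) + 1) (by omega) (by omega)
  have eB : (B : ℤ) = w ((j:ℤ) - 1) := by
    simp only [hB, hf, hcast]
    exact Int.toNat_of_nonneg (by omega)
  have eX : (X : ℤ) = w (j : ℤ) := by
    simp only [hX, hf]
    exact Int.toNat_of_nonneg (by omega)
  have eZ : (Z : ℤ) = w ((j:ℤ) + 1) := by
    simp only [hZ, hf, hcast2]
    exact Int.toNat_of_nonneg (by omega)
  -- reduce to the three-letter insertion lemma
  rw [hone, hone']
  show List.foldl insertTab [] (u ++ (B :: Z :: X :: v))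
      = List.foldl insertTab [] (u ++ (B :: X :: Z :: v))
  rw [List.foldl_append, List.foldl_append]
  simp only [List.foldl_cons]
  have key : insertTab (insertTab (insertTab (List.foldl insertTab [] u) B) Z) X
      = insertTab (insertTab (insertTab (List.foldl insertTab [] u) B) X) Z := by
    rcases hbetween with ⟨h1, h2⟩ | ⟨h1, h2⟩
    · exact (knuth_insert _ hPsort hPnodup X B Z (by omega) (by omega) hBfresh).symm
    · exact knuth_insert _ hPsort hPnodup Z B X (by omega) (by omega) hBfresh
  rw [key]
end

section
/- Two permutations in S_n have the same Robinson–Schensted insertion tableau if and only if they are connected by a sequence of Knuth relations. -/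
/-- `a` lies strictly between `b` and `c`. -/
def StrictlyBetween (a b c : ℤ) : Prop := (b < a ∧ a < c) ∨ (c < a ∧ a < b)

/-- A single Knuth relation on `S_n`: transpose the entries in positions `j` and
`j+1` when `w(j-1)` (case (i)) or `w(j+2)` (case (ii)) lies strictly between
`w(j)` and `w(j+1)`. -/
def KnuthStep (n : ℕ) (w v : Equiv.Perm ℤ) : Prop :=
  ∃ j : ℕ, 1 ≤ j ∧ j + 1 ≤ n ∧ v = w * aswap j ∧
    ((2 ≤ j ∧ StrictlyBetween (w ((j : ℤ) - 1)) (w (j : ℤ)) (w ((j : ℤ) + 1))) ∨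
     (j + 2 ≤ n ∧ StrictlyBetween (w ((j : ℤ) + 2)) (w (j : ℤ)) (w ((j : ℤ) + 1))))


namespace RSKx
open List Equiv

open List

lemma insertRow_lt {x b : ℕ} (h : x < b) (B : List ℕ) :
    insertRow x (b :: B) = (x :: B, some b) := by
  simp [insertRow, h]

lemma insertRow_append {x : ℕ} {A : List ℕ} (h : ∀ a ∈ A, ¬ x < a) (B : List ℕ) :
    insertRow x (A ++ B) = (A ++ (insertRow x B).1, (insertRow x B).2) := by
  induction A with
  | nil => simp
  | cons a A ih =>
      simp only [cons_append, insertRow, if_neg (h a mem_cons_self)]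
      rw [ih (fun a ha => h a (mem_cons_of_mem _ ha))]

lemma insertRow_mid {x b : ℕ} {A : List ℕ} (hA : ∀ a ∈ A, ¬ x < a) (hb : x < b)
    (B : List ℕ) : insertRow x (A ++ b :: B) = (A ++ x :: B, some b) := by
  rw [insertRow_append hA, insertRow_lt hb]

lemma insertRow_last {x : ℕ} {A : List ℕ} (hA : ∀ a ∈ A, ¬ x < a) :
    insertRow x A = (A ++ [x], none) := by
  have := insertRow_append hA []
  simpa [insertRow] using this

lemma iT_some {R R' : List ℕ} {T : List (List ℕ)} {x b : ℕ}
    (h : insertRow x R = (R', some b)) :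
    insertTab (R :: T) x = R' :: insertTab T b := by
  simp [insertTab, h]

lemma iT_none {R R' : List ℕ} {T : List (List ℕ)} {x : ℕ}
    (h : insertRow x R = (R', none)) :
    insertTab (R :: T) x = R' :: T := by
  simp [insertTab, h]

/-- tableau invariant -/
def Inv (T : List (List ℕ)) : Prop :=
  (∀ R ∈ T, R.Pairwise (· < ·)) ∧ T.flatten.Nodup

lemma split2 {x : ℕ} : ∀ {R : List ℕ}, R.Pairwise (· < ·) → x ∉ R →
    ∃ A B, R = A ++ B ∧ (∀ a ∈ A, a < x) ∧ (∀ b ∈ B, x < b)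
  | [], _, _ => ⟨[], [], by simp, by simp, by simp⟩
  | e :: R, hp, hx => by
      rcases lt_trichotomy e x with h | h | h
      · obtain ⟨A, B, h1, h2, h3⟩ := split2 (pairwise_cons.1 hp).2 (fun hm => hx (mem_cons_of_mem _ hm))
        exact ⟨e :: A, B, by simp [h1], by simpa using ⟨h, h2⟩, h3⟩
      · exact absurd (h ▸ mem_cons_self (a := e) (l := R)) hx
      · refine ⟨[], e :: R, by simp, by simp, ?_⟩
        intro b hb
        rcases mem_cons.1 hb with rfl | hb
        · exact h
        · exact h.trans ((pairwise_cons.1 hp).1 b hb)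

lemma split4 {x y z : ℕ} {R : List ℕ} (hp : R.Pairwise (· < ·))
    (hx : x ∉ R) (hy : y ∉ R) (hz : z ∉ R) (hxy : x < y) (hyz : y < z) :
    ∃ A C D B, R = A ++ (C ++ (D ++ B)) ∧ (∀ a ∈ A, a < x) ∧
      (∀ c ∈ C, x < c ∧ c < y) ∧ (∀ d ∈ D, y < d ∧ d < z) ∧ (∀ b ∈ B, z < b) := by
  obtain ⟨A, B1, rfl, hA, hB1⟩ := split2 hp hx
  have hp1 : B1.Pairwise (· < ·) := (pairwise_append.1 hp).2.1
  obtain ⟨C, B2, rfl, hC, hB2⟩ := split2 hp1 (fun hm => hy (mem_append_right _ hm))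
  have hp2 : B2.Pairwise (· < ·) := (pairwise_append.1 hp1).2.1
  obtain ⟨D, B, rfl, hD, hB⟩ := split2 hp2 (fun hm => hz (mem_append_right _ (mem_append_right _ hm)))
  exact ⟨A, C, D, B, by simp, hA,
    fun c hc => ⟨hB1 c (mem_append_left _ hc), hC c hc⟩,
    fun d hd => ⟨hB2 d (mem_append_left _ hd), hD d hd⟩, hB⟩


lemma insertTab_spec : ∀ (T : List (List ℕ)) (x : ℕ), Inv T → x ∉ T.flatten →
    Inv (insertTab T x) ∧ (insertTab T x).flatten.Perm (x :: T.flatten)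
  | [], x, _, _ => by
      constructor
      · exact ⟨by simp [insertTab], by simp [insertTab]⟩
      · simp [insertTab]
  | R :: T', x, hT, hx => by
      have hR : R.Pairwise (· < ·) := hT.1 R (mem_cons_self)
      have hnd : (R ++ T'.flatten).Nodup := by simpa using hT.2
      have hxR : x ∉ R := fun h => hx (by simp [h])
      have hxT : x ∉ T'.flatten := fun h => hx (by simp [h])
      obtain ⟨A, B, rfl, hA, hB⟩ := split2 hR hxR
      have hrows' : ∀ S ∈ T', S.Pairwise (· < ·) := fun S hS => hT.1 S (mem_cons_of_mem _ hS)
      have hndT : T'.flatten.Nodup := (nodup_append.1 hnd).2.1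
      rcases B with _ | ⟨b, B'⟩
      · have e : insertRow x (A ++ []) = ((A ++ []) ++ [x], none) :=
          insertRow_last (fun a ha => by have := hA a (by simpa using ha); omega)
        rw [iT_none e]
        have hperm : (((A ++ []) ++ [x]) :: T').flatten.Perm (x :: ((A ++ []) :: T').flatten) := by
          simp only [flatten_cons, append_nil]
          simpa using (perm_middle (a := x) (l₁ := A) (l₂ := T'.flatten)).symm
        refine ⟨⟨?_, ?_⟩, hperm⟩
        · intro S hS
          rcases mem_cons.1 hS with rfl | hS
          · simp only [append_nil]
            rw [pairwise_append]
            exact ⟨by simpa using hR, by simp, by simpa using hA⟩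
          · exact hrows' S hS
        · exact (hperm.nodup_iff).2 (nodup_cons.2 ⟨hx, hT.2⟩)
      · have e : insertRow x (A ++ b :: B') = (A ++ x :: B', some b) :=
          insertRow_mid (fun a ha => by have := hA a ha; omega) (hB b (by simp)) B'
        rw [iT_some e]
        have hbR : b ∈ A ++ b :: B' := by simp
        have hbT : b ∉ T'.flatten := (fun h => (disjoint_of_nodup_append hnd) hbR h)
        have hIT : Inv T' := ⟨hrows', hndT⟩
        obtain ⟨ih1, ih2⟩ := insertTab_spec T' b hIT hbT
        have hpB' : ∀ u ∈ B', x < u := fun u hu => hB u (by simp [hu])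
        have hBp : (b :: B').Pairwise (· < ·) :=
          hR.sublist (sublist_append_right A _)
        have hrow : (A ++ x :: B').Pairwise (· < ·) := by
          rw [pairwise_append]
          refine ⟨(pairwise_append.1 hR).1, ?_, ?_⟩
          · rw [pairwise_cons]
            exact ⟨hpB', (pairwise_cons.1 hBp).2⟩
          · intro a ha u hu
            rcases mem_cons.1 hu with rfl | hu
            · exact hA a ha
            · exact (hA a ha).trans (hpB' u hu)
        have hperm : ((A ++ x :: B') :: insertTab T' b).flatten.Perm
            (x :: ((A ++ b :: B') :: T').flatten) := by
          simp only [flatten_cons]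
          refine ((Perm.append_left _ ih2).trans ?_)
          rw [perm_iff_count]
          intro a
          simp only [count_append, count_cons]
          omega
        refine ⟨⟨?_, ?_⟩, hperm⟩
        · intro S hS
          rcases mem_cons.1 hS with rfl | hS
          · exact hrow
          · exact ih1.1 S hS
        · exact (hperm.nodup_iff).2 (nodup_cons.2 ⟨hx, hT.2⟩)

lemma Ptab_append (l l' : List ℕ) : Ptab (l ++ l') = l'.foldl insertTab (Ptab l) := by
  simp [Ptab, foldl_append]

lemma Ptab_spec (l : List ℕ) (hl : l.Nodup) : Inv (Ptab l) ∧ (Ptab l).flatten.Perm l := by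
  induction l using List.reverseRecOn with
  | nil => exact ⟨⟨by simp [Ptab], by simp [Ptab]⟩, by simp [Ptab]⟩
  | append_singleton l x ih =>
      have hnd : l.Nodup := hl.sublist (sublist_append_left _ _)
      have hxl : x ∉ l := by
        intro h
        have := hl
        rw [nodup_append] at this
        exact (this.2.2 x h x (by simp)) rfl
      obtain ⟨ih1, ih2⟩ := ih hnd
      have hxP : x ∉ (Ptab l).flatten := fun h => hxl (ih2.mem_iff.1 h)
      rw [Ptab_append]
      have := insertTab_spec (Ptab l) x ih1 hxP
      refine ⟨by simpa using this.1, ?_⟩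
      simp only [foldl_cons, foldl_nil]
      exact this.2.trans (by
        have : (x :: l).Perm (l ++ [x]) := by
          simpa using (perm_middle (a := x) (l₁ := l) (l₂ := [])).symm
        exact (Perm.cons x ih2).trans this)

theorem insB : ∀ (T : List (List ℕ)) (x y z : ℕ), Inv T →
    x ∉ T.flatten → y ∉ T.flatten → z ∉ T.flatten → x < y → y < z →
    insertTab (insertTab (insertTab T y) x) z
      = insertTab (insertTab (insertTab T y) z) x
  | [], x, y, z, _, _, _, _, hxy, hyz => by
      have h1 : ¬ z < x := by omega
      have h2 : ¬ z < y := by omega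
      have h3 : x < z := by omega
      simp [insertTab, insertRow, hxy, hyz, h1, h2, h3]
  | R :: T', x, y, z, hT, hx, hy, hz, hxy, hyz => by
      have hR : R.Pairwise (· < ·) := hT.1 R (mem_cons_self)
      have hnd : (R ++ T'.flatten).Nodup := by simpa using hT.2
      have hdisj := disjoint_of_nodup_append hnd
      have hxR : x ∉ R := fun h => hx (by simp [h])
      have hyR : y ∉ R := fun h => hy (by simp [h])
      have hzR : z ∉ R := fun h => hz (by simp [h])
      have hyT : y ∉ T'.flatten := fun h => hy (by simp [h])
      have hIT : Inv T' := ⟨fun S hS => hT.1 S (mem_cons_of_mem _ hS), (nodup_append.1 hnd).2.1⟩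
      obtain ⟨A, C, D, B, rfl, hA, hC, hD, hB⟩ := split4 hR hxR hyR hzR hxy hyz
      obtain ⟨c₁, C₂, hC1⟩ := exists_cons_of_ne_nil (by simp : C ++ [y] ≠ ([] : List ℕ))
      have hCy : ∀ u ∈ C ++ [y], x < u ∧ u ≤ y := by
        intro u hu
        rcases mem_append.1 hu with h | h
        · exact ⟨(hC u h).1, le_of_lt (hC u h).2⟩
        · simp at h; subst h; exact ⟨hxy, le_refl _⟩
      have hc₁ : x < c₁ ∧ c₁ ≤ y := hCy c₁ (hC1 ▸ mem_cons_self)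
      have hC₂ : ∀ u ∈ C₂, x < u ∧ u ≤ y := fun u hu => hCy u (hC1 ▸ mem_cons_of_mem _ hu)
      have hfresh : ∀ u, u ∈ A ++ (C ++ (D ++ B)) → u ∉ T'.flatten := fun u hu => hdisj hu
      have hc₁T : c₁ ∉ T'.flatten := by
        have : c₁ ∈ C ++ [y] := hC1 ▸ mem_cons_self (a := c₁) (l := C₂)
        rcases mem_append.1 this with h | h
        · exact hfresh c₁ (by simp [h])
        · simp at h; subst h; exact hyT
      have hACy : ∀ u ∈ A ++ C, ¬ y < u := by
        simp only [mem_append]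
        rintro u (h | h)
        · have := hA u h; omega
        · have := (hC u h).2; omega
      have hAx : ∀ a ∈ A, ¬ x < a := fun a ha => by have := hA a ha; omega
      rcases D with _ | ⟨d, D'⟩
      · rcases B with _ | ⟨f, F⟩
        · -- D = [], B = []
          have ey : insertRow y (A ++ (C ++ ([] ++ []))) = ((A ++ C) ++ [y], none) := by
            rw [show A ++ (C ++ ([] ++ ([]:List ℕ))) = A ++ C by simp]
            exact insertRow_last hACy
          rw [iT_none ey]
          have ex : insertRow x ((A ++ C) ++ [y]) = (A ++ x :: C₂, some c₁) := by
            rw [show (A ++ C) ++ [y] = A ++ c₁ :: C₂ by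
              have h := congrArg (fun l => A ++ l) hC1; simpa using h]
            exact insertRow_mid hAx (by omega) C₂
          rw [iT_some ex]
          have ez : insertRow z (A ++ x :: C₂) = ((A ++ x :: C₂) ++ [z], none) := by
            refine insertRow_last ?_
            simp only [mem_append, mem_cons]
            rintro u (h | rfl | h)
            · have := hA u h; omega
            · omega
            · have := hC₂ u h; omega
          rw [iT_none ez]
          have ez2 : insertRow z ((A ++ C) ++ [y]) = (((A ++ C) ++ [y]) ++ [z], none) := by
            refine insertRow_last ?_
            simp only [mem_append, mem_singleton]
            rintro u ((h | h) | rfl)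
            · have := hA u h; omega
            · have := hC u h; omega
            · omega
          rw [iT_none ez2]
          have ex2 : insertRow x (((A ++ C) ++ [y]) ++ [z]) = (A ++ x :: (C₂ ++ [z]), some c₁) := by
            rw [show ((A ++ C) ++ [y]) ++ [z] = A ++ c₁ :: (C₂ ++ [z]) by
              have h := congrArg (fun l => A ++ (l ++ [z])) hC1; simpa using h]
            exact insertRow_mid hAx (by omega) _
          rw [iT_some ex2]
          simp
        · -- D = [], B = f :: F
          have hzf : z < f := hB f (by simp)
          have hfT : f ∉ T'.flatten := hfresh f (by simp)
          have hBp : (f :: F).Pairwise (· < ·) :=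
            hR.sublist ((sublist_append_right ([]:List ℕ) _).trans
              ((sublist_append_right C _).trans (sublist_append_right A _)))
          have ey : insertRow y (A ++ (C ++ ([] ++ (f :: F)))) = ((A ++ C) ++ y :: F, some f) := by
            rw [show A ++ (C ++ ([] ++ (f :: F))) = (A ++ C) ++ f :: F by simp]
            exact insertRow_mid hACy (by omega) F
          rw [iT_some ey]
          have ex : insertRow x ((A ++ C) ++ y :: F) = (A ++ x :: (C₂ ++ F), some c₁) := by
            rw [show (A ++ C) ++ y :: F = A ++ c₁ :: (C₂ ++ F) by
              have h := congrArg (fun l => A ++ (l ++ F)) hC1; simpa using h]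
            exact insertRow_mid hAx (by omega) _
          rw [iT_some ex]
          rcases F with _ | ⟨g, G⟩
          · -- F = []
            have ez : insertRow z (A ++ x :: (C₂ ++ [])) = ((A ++ x :: (C₂ ++ [])) ++ [z], none) := by
              refine insertRow_last ?_
              simp only [mem_append, mem_cons, not_mem_nil, or_false]
              rintro u (h | rfl | h)
              · have := hA u h; omega
              · omega
              · have := hC₂ u h; omega
            rw [iT_none ez]
            have ez2 : insertRow z ((A ++ C) ++ y :: []) = (((A ++ C) ++ y :: []) ++ [z], none) := by
              refine insertRow_last ?_
              simp only [mem_append, mem_cons, not_mem_nil, or_false]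
              rintro u ((h | h) | rfl)
              · have := hA u h; omega
              · have := hC u h; omega
              · omega
            rw [iT_none ez2]
            have ex2 : insertRow x (((A ++ C) ++ y :: []) ++ [z])
                = (A ++ x :: (C₂ ++ [z]), some c₁) := by
              rw [show ((A ++ C) ++ y :: []) ++ [z] = A ++ c₁ :: (C₂ ++ [z]) by
                have h := congrArg (fun l => A ++ (l ++ [z])) hC1; simpa using h]
              exact insertRow_mid hAx (by omega) _
            rw [iT_some ex2]
            simp
          · -- F = g :: G
            have hfg : f < g := (pairwise_cons.1 hBp).1 g (by simp)
            have hgT : g ∉ T'.flatten := hfresh g (by simp)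
            have ez : insertRow z (A ++ x :: (C₂ ++ g :: G))
                = ((A ++ x :: C₂) ++ z :: G, some g) := by
              rw [show A ++ x :: (C₂ ++ g :: G) = (A ++ x :: C₂) ++ g :: G by simp]
              refine insertRow_mid ?_ (by have := hB g (by simp); omega) G
              simp only [mem_append, mem_cons, not_mem_nil, or_false]
              rintro u (h | rfl | h)
              · have := hA u h; omega
              · omega
              · have := hC₂ u h; omega
            rw [iT_some ez]
            have ez2 : insertRow z ((A ++ C) ++ y :: (g :: G))
                = (((A ++ C) ++ [y]) ++ z :: G, some g) := by
              rw [show (A ++ C) ++ y :: (g :: G) = ((A ++ C) ++ [y]) ++ g :: G by simp]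
              refine insertRow_mid ?_ (by have := hB g (by simp); omega) G
              simp only [mem_append, mem_singleton]
              rintro u ((h | h) | rfl)
              · have := hA u h; omega
              · have := hC u h; omega
              · omega
            rw [iT_some ez2]
            have ex2 : insertRow x (((A ++ C) ++ [y]) ++ z :: G)
                = (A ++ x :: (C₂ ++ z :: G), some c₁) := by
              rw [show ((A ++ C) ++ [y]) ++ z :: G = A ++ c₁ :: (C₂ ++ z :: G) by
                have h := congrArg (fun l => A ++ (l ++ z :: G)) hC1; simpa using h]
              exact insertRow_mid hAx (by omega) _
            rw [iT_some ex2]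
            have htail := insB T' c₁ f g hIT hc₁T hfT hgT (by omega) hfg
            rw [htail]
            simp
      · -- D = d :: D'
        have hdP := hD d (mem_cons_self)
        have hD' : ∀ u ∈ D', y < u ∧ u < z := fun u hu => hD u (mem_cons_of_mem _ hu)
        have hdT : d ∉ T'.flatten := hfresh d (by simp)
        have ey : insertRow y (A ++ (C ++ ((d :: D') ++ B)))
            = ((A ++ C) ++ y :: (D' ++ B), some d) := by
          rw [show A ++ (C ++ ((d :: D') ++ B)) = (A ++ C) ++ d :: (D' ++ B) by simp]
          exact insertRow_mid hACy (by omega) _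
        rw [iT_some ey]
        have ex : insertRow x ((A ++ C) ++ y :: (D' ++ B))
            = (A ++ x :: (C₂ ++ (D' ++ B)), some c₁) := by
          rw [show (A ++ C) ++ y :: (D' ++ B) = A ++ c₁ :: (C₂ ++ (D' ++ B)) by
            have h := congrArg (fun l => A ++ (l ++ (D' ++ B))) hC1; simpa using h]
          exact insertRow_mid hAx (by omega) _
        rw [iT_some ex]
        rcases B with _ | ⟨f, F⟩
        · -- B = []
          have ez : insertRow z (A ++ x :: (C₂ ++ (D' ++ [])))
              = ((A ++ x :: (C₂ ++ (D' ++ []))) ++ [z], none) := by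
            refine insertRow_last ?_
            simp only [mem_append, mem_cons, not_mem_nil, or_false]
            rintro u (h | rfl | h | h)
            · have := hA u h; omega
            · omega
            · have := hC₂ u h; omega
            · have := hD' u h; omega
          rw [iT_none ez]
          have ez2 : insertRow z ((A ++ C) ++ y :: (D' ++ []))
              = (((A ++ C) ++ y :: (D' ++ [])) ++ [z], none) := by
            refine insertRow_last ?_
            simp only [mem_append, mem_cons, not_mem_nil, or_false]
            rintro u ((h | h) | rfl | h)
            · have := hA u h; omega
            · have := hC u h; omega
            · omega
            · have := hD' u h; omega
          rw [iT_none ez2]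
          have ex2 : insertRow x (((A ++ C) ++ y :: (D' ++ [])) ++ [z])
              = (A ++ x :: (C₂ ++ (D' ++ [z])), some c₁) := by
            rw [show ((A ++ C) ++ y :: (D' ++ [])) ++ [z] = A ++ c₁ :: (C₂ ++ (D' ++ [z])) by
              have h := congrArg (fun l => A ++ (l ++ (D' ++ [z]))) hC1; simpa using h]
            exact insertRow_mid hAx (by omega) _
          rw [iT_some ex2]
          simp
        · -- B = f :: F
          have hzf : z < f := hB f (by simp)
          have hfT : f ∉ T'.flatten := hfresh f (by simp)
          have ez : insertRow z (A ++ x :: (C₂ ++ (D' ++ f :: F)))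
              = ((A ++ x :: (C₂ ++ D')) ++ z :: F, some f) := by
            rw [show A ++ x :: (C₂ ++ (D' ++ f :: F)) = (A ++ x :: (C₂ ++ D')) ++ f :: F by simp]
            refine insertRow_mid ?_ (by omega) F
            simp only [mem_append, mem_cons]
            rintro u (h | rfl | h | h)
            · have := hA u h; omega
            · omega
            · have := hC₂ u h; omega
            · have := hD' u h; omega
          rw [iT_some ez]
          have ez2 : insertRow z ((A ++ C) ++ y :: (D' ++ f :: F))
              = (((A ++ C) ++ y :: D') ++ z :: F, some f) := by
            rw [show (A ++ C) ++ y :: (D' ++ f :: F) = ((A ++ C) ++ y :: D') ++ f :: F by simp]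
            refine insertRow_mid ?_ (by omega) F
            simp only [mem_append, mem_cons]
            rintro u ((h | h) | rfl | h)
            · have := hA u h; omega
            · have := hC u h; omega
            · omega
            · have := hD' u h; omega
          rw [iT_some ez2]
          have ex2 : insertRow x (((A ++ C) ++ y :: D') ++ z :: F)
              = (A ++ x :: (C₂ ++ (D' ++ z :: F)), some c₁) := by
            rw [show ((A ++ C) ++ y :: D') ++ z :: F = A ++ c₁ :: (C₂ ++ (D' ++ z :: F)) by
              have h := congrArg (fun l => A ++ (l ++ (D' ++ z :: F))) hC1; simpa using h]
            exact insertRow_mid hAx (by omega) _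
          rw [iT_some ex2]
          have htail := insB T' c₁ d f hIT hc₁T hdT hfT (by omega) (by omega)
          rw [htail]
          simp

theorem insA : ∀ (T : List (List ℕ)) (x y z : ℕ), Inv T →
    x ∉ T.flatten → y ∉ T.flatten → z ∉ T.flatten → x < y → y < z →
    insertTab (insertTab (insertTab T x) z) y
      = insertTab (insertTab (insertTab T z) x) y
  | [], x, y, z, _, _, _, _, hxy, hyz => by
      have h1 : ¬ z < x := by omega
      have h3 : x < z := by omega
      have h4 : ¬ y < x := by omega
      simp [insertTab, insertRow, h1, h3, h4, hyz]
  | R :: T', x, y, z, hT, hx, hy, hz, hxy, hyz => by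
      have hR : R.Pairwise (· < ·) := hT.1 R (mem_cons_self)
      have hnd : (R ++ T'.flatten).Nodup := by simpa using hT.2
      have hdisj := disjoint_of_nodup_append hnd
      have hxR : x ∉ R := fun h => hx (by simp [h])
      have hyR : y ∉ R := fun h => hy (by simp [h])
      have hzR : z ∉ R := fun h => hz (by simp [h])
      have hzT : z ∉ T'.flatten := fun h => hz (by simp [h])
      have hIT : Inv T' := ⟨fun S hS => hT.1 S (mem_cons_of_mem _ hS), (nodup_append.1 hnd).2.1⟩
      obtain ⟨A, C, D, B, rfl, hA, hC, hD, hB⟩ := split4 hR hxR hyR hzR hxy hyz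
      have hfresh : ∀ u, u ∈ A ++ (C ++ (D ++ B)) → u ∉ T'.flatten := fun u hu => hdisj hu
      have hAx : ∀ a ∈ A, ¬ x < a := fun a ha => by have := hA a ha; omega
      have hAz : ∀ a ∈ A, ¬ z < a := fun a ha => by have := hA a ha; omega
      rcases C with _ | ⟨c, C'⟩
      · rcases D with _ | ⟨d, D''⟩
        · rcases B with _ | ⟨f, F⟩
          · -- C=[], D=[], B=[]
            have ex : insertRow x (A ++ ([] ++ ([] ++ []))) = (A ++ [x], none) := by
              rw [show A ++ ([] ++ ([] ++ ([]:List ℕ))) = A by simp]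
              exact insertRow_last hAx
            rw [iT_none ex]
            have ez : insertRow z (A ++ [x]) = ((A ++ [x]) ++ [z], none) := by
              refine insertRow_last ?_
              simp only [mem_append, mem_singleton]
              rintro u (h | rfl)
              · have := hA u h; omega
              · omega
            rw [iT_none ez]
            have ey : insertRow y ((A ++ [x]) ++ [z]) = ((A ++ [x]) ++ [y], some z) := by
              rw [show (A ++ [x]) ++ [z] = (A ++ [x]) ++ z :: [] from rfl]
              refine insertRow_mid ?_ (by omega) []
              simp only [mem_append, mem_singleton]
              rintro u (h | rfl)
              · have := hA u h; omega
              · omega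
            rw [iT_some ey]
            have ez2 : insertRow z (A ++ ([] ++ ([] ++ []))) = (A ++ [z], none) := by
              rw [show A ++ ([] ++ ([] ++ ([]:List ℕ))) = A by simp]
              exact insertRow_last hAz
            rw [iT_none ez2]
            have ex2 : insertRow x (A ++ [z]) = (A ++ [x], some z) := by
              rw [show A ++ [z] = A ++ z :: [] from rfl]
              exact insertRow_mid hAx (by omega) []
            rw [iT_some ex2]
            have ey2 : insertRow y (A ++ [x]) = ((A ++ [x]) ++ [y], none) := by
              refine insertRow_last ?_
              simp only [mem_append, mem_singleton]
              rintro u (h | rfl)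
              · have := hA u h; omega
              · omega
            rw [iT_none ey2]
          · -- C=[], D=[], B = f::F
            have hzf : z < f := hB f (by simp)
            have hfT : f ∉ T'.flatten := hfresh f (by simp)
            have hBp : (f :: F).Pairwise (· < ·) :=
              hR.sublist ((sublist_append_right ([]:List ℕ) _).trans
                ((sublist_append_right ([]:List ℕ) _).trans (sublist_append_right A _)))
            have ex : insertRow x (A ++ ([] ++ ([] ++ f :: F))) = (A ++ x :: F, some f) := by
              rw [show A ++ ([] ++ ([] ++ f :: F)) = A ++ f :: F by simp]
              exact insertRow_mid hAx (by omega) F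
            rw [iT_some ex]
            have ez2 : insertRow z (A ++ ([] ++ ([] ++ f :: F))) = (A ++ z :: F, some f) := by
              rw [show A ++ ([] ++ ([] ++ f :: F)) = A ++ f :: F by simp]
              exact insertRow_mid hAz (by omega) F
            rw [iT_some ez2]
            have ex2 : insertRow x (A ++ z :: F) = (A ++ x :: F, some z) :=
              insertRow_mid hAx (by omega) F
            rw [iT_some ex2]
            rcases F with _ | ⟨g, G⟩
            · -- F = []
              have ez : insertRow z (A ++ x :: []) = ((A ++ x :: []) ++ [z], none) := by
                refine insertRow_last ?_
                simp only [mem_append, mem_cons, not_mem_nil, or_false]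
                rintro u (h | rfl)
                · have := hA u h; omega
                · omega
              rw [iT_none ez]
              have ey : insertRow y ((A ++ x :: []) ++ [z]) = ((A ++ x :: []) ++ [y], some z) := by
                rw [show (A ++ x :: []) ++ [z] = (A ++ x :: []) ++ z :: [] from rfl]
                refine insertRow_mid ?_ (by omega) []
                simp only [mem_append, mem_cons, not_mem_nil, or_false]
                rintro u (h | rfl)
                · have := hA u h; omega
                · omega
              rw [iT_some ey]
              have ey2 : insertRow y (A ++ x :: []) = ((A ++ x :: []) ++ [y], none) := by
                refine insertRow_last ?_
                simp only [mem_append, mem_cons, not_mem_nil, or_false]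
                rintro u (h | rfl)
                · have := hA u h; omega
                · omega
              rw [iT_none ey2]
            · -- F = g :: G
              have hfg : f < g := (pairwise_cons.1 hBp).1 g (by simp)
              have hgT : g ∉ T'.flatten := hfresh g (by simp)
              have hzg : z < g := hB g (by simp)
              have ez : insertRow z (A ++ x :: (g :: G)) = ((A ++ [x]) ++ z :: G, some g) := by
                rw [show A ++ x :: (g :: G) = (A ++ [x]) ++ g :: G by simp]
                refine insertRow_mid ?_ hzg G
                simp only [mem_append, mem_singleton]
                rintro u (h | rfl)
                · have := hA u h; omega
                · omega
              rw [iT_some ez]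
              have ey : insertRow y ((A ++ [x]) ++ z :: G) = ((A ++ [x]) ++ y :: G, some z) := by
                refine insertRow_mid ?_ (by omega) G
                simp only [mem_append, mem_singleton]
                rintro u (h | rfl)
                · have := hA u h; omega
                · omega
              rw [iT_some ey]
              have ey2 : insertRow y (A ++ x :: (g :: G)) = ((A ++ [x]) ++ y :: G, some g) := by
                rw [show A ++ x :: (g :: G) = (A ++ [x]) ++ g :: G by simp]
                refine insertRow_mid ?_ (by omega) G
                simp only [mem_append, mem_singleton]
                rintro u (h | rfl)
                · have := hA u h; omega
                · omega
              rw [iT_some ey2]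
              have htail := (insB T' z f g hIT hzT hfT hgT hzf hfg).symm
              rw [htail]
        · -- C=[], D = d::D''
          have hdP := hD d (mem_cons_self)
          have hD'' : ∀ u ∈ D'', y < u ∧ u < z := fun u hu => hD u (mem_cons_of_mem _ hu)
          have hdT : d ∉ T'.flatten := hfresh d (by simp)
          have hDp : (d :: D'').Pairwise (· < ·) :=
            hR.sublist (((sublist_append_left _ B).trans
              (sublist_append_right ([]:List ℕ) _)).trans (sublist_append_right A _))
          have hdlt : ∀ u ∈ D'' ++ [z], d < u ∧ u ≤ z := by
            intro u hu
            rcases mem_append.1 hu with h | h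
            · exact ⟨(pairwise_cons.1 hDp).1 u h, le_of_lt (hD'' u h).2⟩
            · simp at h; subst h; exact ⟨hdP.2, le_refl _⟩
          obtain ⟨e₁, E₂, hE1⟩ := exists_cons_of_ne_nil (by simp : D'' ++ [z] ≠ ([] : List ℕ))
          have he₁ : d < e₁ ∧ e₁ ≤ z := hdlt e₁ (hE1 ▸ mem_cons_self)
          have hE₂ : ∀ u ∈ E₂, d < u ∧ u ≤ z := fun u hu => hdlt u (hE1 ▸ mem_cons_of_mem _ hu)
          have he₁T : e₁ ∉ T'.flatten := by
            have : e₁ ∈ D'' ++ [z] := hE1 ▸ mem_cons_self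
            rcases mem_append.1 this with h | h
            · exact hfresh e₁ (by simp [h])
            · simp at h; subst h; exact hzT
          have ex : insertRow x (A ++ ([] ++ ((d :: D'') ++ B)))
              = (A ++ x :: (D'' ++ B), some d) := by
            rw [show A ++ ([] ++ ((d :: D'') ++ B)) = A ++ d :: (D'' ++ B) by simp]
            exact insertRow_mid hAx (by omega) _
          rw [iT_some ex]
          rcases B with _ | ⟨f, F⟩
          · -- B = []
            have ezB0 : insertRow z (A ++ x :: (D'' ++ []))
                = ((A ++ x :: (D'' ++ [])) ++ [z], none) := by
              refine insertRow_last ?_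
              simp only [mem_append, mem_cons, not_mem_nil, or_false]
              rintro u (h | rfl | h)
              · have := hA u h; omega
              · omega
              · have := hD'' u h; omega
            rw [iT_none ezB0]
            have ey1 : insertRow y ((A ++ x :: (D'' ++ [])) ++ [z])
                = ((A ++ [x]) ++ y :: E₂, some e₁) := by
              rw [show (A ++ x :: (D'' ++ [])) ++ [z] = (A ++ [x]) ++ e₁ :: E₂ by
                have h := congrArg (fun l => (A ++ [x]) ++ l) hE1; simpa using h]
              refine insertRow_mid ?_ (by omega) E₂
              simp only [mem_append, mem_singleton]
              rintro u (h | rfl)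
              · have := hA u h; omega
              · omega
            rw [iT_some ey1]
            have ez2 : insertRow z (A ++ ([] ++ ((d :: D'') ++ [])))
                = ((A ++ ([] ++ ((d :: D'') ++ []))) ++ [z], none) := by
              refine insertRow_last ?_
              simp only [mem_append, mem_cons, not_mem_nil, or_false, nil_append, append_nil]
              rintro u (h | rfl | h)
              · have := hA u h; omega
              · omega
              · have := hD'' u h; omega
            rw [iT_none ez2]
            have ex2 : insertRow x ((A ++ ([] ++ ((d :: D'') ++ []))) ++ [z])
                = (A ++ x :: (D'' ++ [z]), some d) := by
              rw [show (A ++ ([] ++ ((d :: D'') ++ []))) ++ [z] = A ++ d :: (D'' ++ [z]) by simp]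
              exact insertRow_mid hAx (by omega) _
            rw [iT_some ex2]
            have ey2 : insertRow y (A ++ x :: (D'' ++ [z]))
                = ((A ++ [x]) ++ y :: E₂, some e₁) := by
              rw [show A ++ x :: (D'' ++ [z]) = (A ++ [x]) ++ e₁ :: E₂ by
                have h := congrArg (fun l => (A ++ [x]) ++ l) hE1; simpa using h]
              refine insertRow_mid ?_ (by omega) E₂
              simp only [mem_append, mem_singleton]
              rintro u (h | rfl)
              · have := hA u h; omega
              · omega
            rw [iT_some ey2]
          · -- B = f :: F
            have hzf : z < f := hB f (by simp)
            have hfT : f ∉ T'.flatten := hfresh f (by simp)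
            have ezB : insertRow z (A ++ x :: (D'' ++ f :: F))
                = ((A ++ x :: D'') ++ z :: F, some f) := by
              rw [show A ++ x :: (D'' ++ f :: F) = (A ++ x :: D'') ++ f :: F by simp]
              refine insertRow_mid ?_ (by omega) F
              simp only [mem_append, mem_cons]
              rintro u (h | rfl | h)
              · have := hA u h; omega
              · omega
              · have := hD'' u h; omega
            rw [iT_some ezB]
            have ey1 : insertRow y ((A ++ x :: D'') ++ z :: F)
                = ((A ++ [x]) ++ y :: (E₂ ++ F), some e₁) := by
              rw [show (A ++ x :: D'') ++ z :: F = (A ++ [x]) ++ e₁ :: (E₂ ++ F) by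
                have h := congrArg (fun l => (A ++ [x]) ++ (l ++ F)) hE1; simpa using h]
              refine insertRow_mid ?_ (by omega) _
              simp only [mem_append, mem_singleton]
              rintro u (h | rfl)
              · have := hA u h; omega
              · omega
            rw [iT_some ey1]
            have ez2 : insertRow z (A ++ ([] ++ ((d :: D'') ++ f :: F)))
                = ((A ++ d :: D'') ++ z :: F, some f) := by
              rw [show A ++ ([] ++ ((d :: D'') ++ f :: F)) = (A ++ d :: D'') ++ f :: F by simp]
              refine insertRow_mid ?_ (by omega) F
              simp only [mem_append, mem_cons]
              rintro u (h | rfl | h)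
              · have := hA u h; omega
              · omega
              · have := hD'' u h; omega
            rw [iT_some ez2]
            have ex2 : insertRow x ((A ++ d :: D'') ++ z :: F)
                = (A ++ x :: (D'' ++ z :: F), some d) := by
              rw [show (A ++ d :: D'') ++ z :: F = A ++ d :: (D'' ++ z :: F) by simp]
              exact insertRow_mid hAx (by omega) _
            rw [iT_some ex2]
            have ey2 : insertRow y (A ++ x :: (D'' ++ z :: F))
                = ((A ++ [x]) ++ y :: (E₂ ++ F), some e₁) := by
              rw [show A ++ x :: (D'' ++ z :: F) = (A ++ [x]) ++ e₁ :: (E₂ ++ F) by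
                have h := congrArg (fun l => (A ++ [x]) ++ (l ++ F)) hE1; simpa using h]
              refine insertRow_mid ?_ (by omega) _
              simp only [mem_append, mem_singleton]
              rintro u (h | rfl)
              · have := hA u h; omega
              · omega
            rw [iT_some ey2]
            have htail := insA T' d e₁ f hIT hdT he₁T hfT (by omega) (by omega)
            rw [htail]
      · -- C = c :: C'
        have hc := hC c (mem_cons_self)
        have hC' : ∀ u ∈ C', x < u ∧ u < y := fun u hu => hC u (mem_cons_of_mem _ hu)
        have hcT : c ∉ T'.flatten := hfresh c (by simp)
        have hylt : ∀ u ∈ D ++ [z], y < u ∧ u ≤ z := by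
          intro u hu
          rcases mem_append.1 hu with h | h
          · exact ⟨(hD u h).1, le_of_lt (hD u h).2⟩
          · simp at h; subst h; exact ⟨hyz, le_refl _⟩
        obtain ⟨d₁, D₂, hD1⟩ := exists_cons_of_ne_nil (by simp : D ++ [z] ≠ ([] : List ℕ))
        have hd₁ : y < d₁ ∧ d₁ ≤ z := hylt d₁ (hD1 ▸ mem_cons_self)
        have hD₂ : ∀ u ∈ D₂, y < u ∧ u ≤ z := fun u hu => hylt u (hD1 ▸ mem_cons_of_mem _ hu)
        have hd₁T : d₁ ∉ T'.flatten := by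
          have : d₁ ∈ D ++ [z] := hD1 ▸ mem_cons_self
          rcases mem_append.1 this with h | h
          · exact hfresh d₁ (by simp [h])
          · simp at h; subst h; exact hzT
        have ex : insertRow x (A ++ ((c :: C') ++ (D ++ B)))
            = (A ++ x :: (C' ++ (D ++ B)), some c) := by
          rw [show A ++ ((c :: C') ++ (D ++ B)) = A ++ c :: (C' ++ (D ++ B)) by simp]
          exact insertRow_mid hAx hc.1 _
        rw [iT_some ex]
        rcases B with _ | ⟨f, F⟩
        · -- B = []
          have ez1 : insertRow z (A ++ x :: (C' ++ (D ++ [])))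
              = ((A ++ x :: (C' ++ (D ++ []))) ++ [z], none) := by
            refine insertRow_last ?_
            simp only [mem_append, mem_cons, not_mem_nil, or_false]
            rintro u (h | rfl | h | h)
            · have := hA u h; omega
            · omega
            · have := hC' u h; omega
            · have := hD u h; omega
          rw [iT_none ez1]
          have ey1 : insertRow y ((A ++ x :: (C' ++ (D ++ []))) ++ [z])
              = ((A ++ x :: C') ++ y :: D₂, some d₁) := by
            rw [show (A ++ x :: (C' ++ (D ++ []))) ++ [z] = (A ++ x :: C') ++ d₁ :: D₂ by
              have h := congrArg (fun l => (A ++ x :: C') ++ l) hD1; simpa using h]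
            refine insertRow_mid ?_ hd₁.1 D₂
            simp only [mem_append, mem_cons]
            rintro u (h | rfl | h)
            · have := hA u h; omega
            · omega
            · have := hC' u h; omega
          rw [iT_some ey1]
          have ez2 : insertRow z (A ++ ((c :: C') ++ (D ++ [])))
              = ((A ++ ((c :: C') ++ (D ++ []))) ++ [z], none) := by
            refine insertRow_last ?_
            simp only [mem_append, mem_cons, not_mem_nil, or_false, append_nil]
            rintro u (h | (rfl | h) | h)
            · have := hA u h; omega
            · omega
            · have := hC' u h; omega
            · have := hD u h; omega
          rw [iT_none ez2]
          have ex2 : insertRow x ((A ++ ((c :: C') ++ (D ++ []))) ++ [z])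
              = (A ++ x :: (C' ++ (D ++ [z])), some c) := by
            rw [show (A ++ ((c :: C') ++ (D ++ []))) ++ [z] = A ++ c :: (C' ++ (D ++ [z])) by simp]
            exact insertRow_mid hAx hc.1 _
          rw [iT_some ex2]
          have ey2 : insertRow y (A ++ x :: (C' ++ (D ++ [z])))
              = ((A ++ x :: C') ++ y :: D₂, some d₁) := by
            rw [show A ++ x :: (C' ++ (D ++ [z])) = (A ++ x :: C') ++ d₁ :: D₂ by
              have h := congrArg (fun l => (A ++ x :: C') ++ l) hD1; simpa using h]
            refine insertRow_mid ?_ hd₁.1 D₂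
            simp only [mem_append, mem_cons]
            rintro u (h | rfl | h)
            · have := hA u h; omega
            · omega
            · have := hC' u h; omega
          rw [iT_some ey2]
        · -- B = f :: F
          have hzf : z < f := hB f (by simp)
          have hfT : f ∉ T'.flatten := hfresh f (by simp)
          have ez1 : insertRow z (A ++ x :: (C' ++ (D ++ f :: F)))
              = ((A ++ x :: (C' ++ D)) ++ z :: F, some f) := by
            rw [show A ++ x :: (C' ++ (D ++ f :: F)) = (A ++ x :: (C' ++ D)) ++ f :: F by simp]
            refine insertRow_mid ?_ (by omega) F
            simp only [mem_append, mem_cons]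
            rintro u (h | rfl | h | h)
            · have := hA u h; omega
            · omega
            · have := hC' u h; omega
            · have := hD u h; omega
          rw [iT_some ez1]
          have ey1 : insertRow y ((A ++ x :: (C' ++ D)) ++ z :: F)
              = ((A ++ x :: C') ++ y :: (D₂ ++ F), some d₁) := by
            rw [show (A ++ x :: (C' ++ D)) ++ z :: F = (A ++ x :: C') ++ d₁ :: (D₂ ++ F) by
              have h := congrArg (fun l => (A ++ x :: C') ++ (l ++ F)) hD1; simpa using h]
            refine insertRow_mid ?_ hd₁.1 _
            simp only [mem_append, mem_cons]
            rintro u (h | rfl | h)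
            · have := hA u h; omega
            · omega
            · have := hC' u h; omega
          rw [iT_some ey1]
          have ez2 : insertRow z (A ++ ((c :: C') ++ (D ++ f :: F)))
              = ((A ++ c :: (C' ++ D)) ++ z :: F, some f) := by
            rw [show A ++ ((c :: C') ++ (D ++ f :: F)) = (A ++ c :: (C' ++ D)) ++ f :: F by simp]
            refine insertRow_mid ?_ (by omega) F
            simp only [mem_append, mem_cons]
            rintro u (h | rfl | h | h)
            · have := hA u h; omega
            · omega
            · have := hC' u h; omega
            · have := hD u h; omega
          rw [iT_some ez2]
          have ex2 : insertRow x ((A ++ c :: (C' ++ D)) ++ z :: F)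
              = (A ++ x :: (C' ++ (D ++ z :: F)), some c) := by
            rw [show (A ++ c :: (C' ++ D)) ++ z :: F = A ++ c :: (C' ++ (D ++ z :: F)) by simp]
            exact insertRow_mid hAx hc.1 _
          rw [iT_some ex2]
          have ey2 : insertRow y (A ++ x :: (C' ++ (D ++ z :: F)))
              = ((A ++ x :: C') ++ y :: (D₂ ++ F), some d₁) := by
            rw [show A ++ x :: (C' ++ (D ++ z :: F)) = (A ++ x :: C') ++ d₁ :: (D₂ ++ F) by
              have h := congrArg (fun l => (A ++ x :: C') ++ (l ++ F)) hD1; simpa using h]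
            refine insertRow_mid ?_ hd₁.1 _
            simp only [mem_append, mem_cons]
            rintro u (h | rfl | h)
            · have := hA u h; omega
            · omega
            · have := hC' u h; omega
          rw [iT_some ey2]
          have htail := insA T' c d₁ f hIT hcT hd₁T hfT (by omega) (by omega)
          rw [htail]


/-- Word-level Knuth move. -/
def Btw (a b c : ℕ) : Prop := (b < a ∧ a < c) ∨ (c < a ∧ a < b)

def KW (l l' : List ℕ) : Prop :=
  (∃ p a b c s, Btw a b c ∧ l = p ++ a :: b :: c :: s ∧ l' = p ++ a :: c :: b :: s) ∨
  (∃ p b c d s, Btw d b c ∧ l = p ++ b :: c :: d :: s ∧ l' = p ++ c :: b :: d :: s)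

lemma Btw.symm {a b c : ℕ} (h : Btw a b c) : Btw a c b := by
  rcases h with h | h
  · exact Or.inr ⟨h.1, h.2⟩
  · exact Or.inl ⟨h.1, h.2⟩

lemma KW.symm {l l' : List ℕ} (h : KW l l') : KW l' l := by
  rcases h with ⟨p, a, b, c, s, hb, h1, h2⟩ | ⟨p, b, c, d, s, hb, h1, h2⟩
  · exact Or.inl ⟨p, a, c, b, s, hb.symm, h2, h1⟩
  · exact Or.inr ⟨p, c, b, d, s, hb.symm, h2, h1⟩

lemma KW.perm {l l' : List ℕ} (h : KW l l') : l.Perm l' := by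
  rcases h with ⟨p, a, b, c, s, _, rfl, rfl⟩ | ⟨p, b, c, d, s, _, rfl, rfl⟩
  · refine Perm.append_left p ?_
    exact Perm.cons a (Perm.swap c b s)
  · exact Perm.append_left p (Perm.swap c b (d :: s))
lemma rtg_perm {l l' : List ℕ} (h : Relation.ReflTransGen KW l l') : l.Perm l' := by
  induction h with
  | refl => exact Perm.refl _
  | tail _ h2 ih => exact ih.trans h2.perm

lemma rtg_symm {l l' : List ℕ} (h : Relation.ReflTransGen KW l l') :
    Relation.ReflTransGen KW l' l :=
  haveI : Std.Symm KW := ⟨fun _ _ h => KW.symm h⟩; (Relation.ReflTransGen.stdSymm (r := KW)).symm _ _ h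

lemma KW_context {u v : List ℕ} (w w' : List ℕ) (h : KW u v) :
    KW (w ++ u ++ w') (w ++ v ++ w') := by
  rcases h with ⟨p, a, b, c, s, hb, rfl, rfl⟩ | ⟨p, b, c, d, s, hb, rfl, rfl⟩
  · exact Or.inl ⟨w ++ p, a, b, c, s ++ w', hb, by simp, by simp⟩
  · exact Or.inr ⟨w ++ p, b, c, d, s ++ w', hb, by simp, by simp⟩

lemma rtg_context {u v : List ℕ} (w w' : List ℕ) (h : Relation.ReflTransGen KW u v) :
    Relation.ReflTransGen KW (w ++ u ++ w') (w ++ v ++ w') := by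
  induction h with
  | refl => exact Relation.ReflTransGen.refl
  | tail _ h2 ih => exact ih.tail (KW_context w w' h2)

lemma KW_Ptab {l l' : List ℕ} (hnd : l.Nodup) (h : KW l l') : Ptab l = Ptab l' := by
  rcases h with ⟨p, a, b, c, s, hb, rfl, rfl⟩ | ⟨p, b, c, d, s, hb, rfl, rfl⟩
  · have hp : p.Nodup := hnd.sublist (sublist_append_left _ _)
    have hdisj := disjoint_of_nodup_append hnd
    obtain ⟨hInv, hperm⟩ := Ptab_spec p hp
    have hmem : ∀ u ∈ ([a, b, c] : List ℕ), u ∉ (Ptab p).flatten := by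
      intro u hu hmem
      exact hdisj (hperm.mem_iff.1 hmem) (by
        simp only [mem_cons, not_mem_nil, or_false] at hu
        rcases hu with rfl | rfl | rfl <;> simp)
    have key : insertTab (insertTab (insertTab (Ptab p) a) b) c
        = insertTab (insertTab (insertTab (Ptab p) a) c) b := by
      rcases hb with h | h
      · exact insB (Ptab p) b a c hInv (hmem b (by simp)) (hmem a (by simp))
          (hmem c (by simp)) h.1 h.2
      · exact (insB (Ptab p) c a b hInv (hmem c (by simp)) (hmem a (by simp))
          (hmem b (by simp)) h.1 h.2).symm
    rw [show p ++ a :: b :: c :: s = (p ++ [a, b, c]) ++ s by simp,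
        show p ++ a :: c :: b :: s = (p ++ [a, c, b]) ++ s by simp,
        Ptab_append (p ++ [a, b, c]) s, Ptab_append p [a, b, c],
        Ptab_append (p ++ [a, c, b]) s, Ptab_append p [a, c, b]]
    have e : foldl insertTab (Ptab p) [a, b, c] = foldl insertTab (Ptab p) [a, c, b] := by
      simpa [foldl_cons] using key
    rw [e]
  · have hp : p.Nodup := hnd.sublist (sublist_append_left _ _)
    have hdisj := disjoint_of_nodup_append hnd
    obtain ⟨hInv, hperm⟩ := Ptab_spec p hp
    have hmem : ∀ u ∈ ([b, c, d] : List ℕ), u ∉ (Ptab p).flatten := by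
      intro u hu hmem
      exact hdisj (hperm.mem_iff.1 hmem) (by
        simp only [mem_cons, not_mem_nil, or_false] at hu
        rcases hu with rfl | rfl | rfl <;> simp)
    have key : insertTab (insertTab (insertTab (Ptab p) b) c) d
        = insertTab (insertTab (insertTab (Ptab p) c) b) d := by
      rcases hb with h | h
      · exact insA (Ptab p) b d c hInv (hmem b (by simp)) (hmem d (by simp))
          (hmem c (by simp)) h.1 h.2
      · exact (insA (Ptab p) c d b hInv (hmem c (by simp)) (hmem d (by simp))
          (hmem b (by simp)) h.1 h.2).symm
    rw [show p ++ b :: c :: d :: s = (p ++ [b, c, d]) ++ s by simp,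
        show p ++ c :: b :: d :: s = (p ++ [c, b, d]) ++ s by simp,
        Ptab_append (p ++ [b, c, d]) s, Ptab_append p [b, c, d],
        Ptab_append (p ++ [c, b, d]) s, Ptab_append p [c, b, d]]
    have e : foldl insertTab (Ptab p) [b, c, d] = foldl insertTab (Ptab p) [c, b, d] := by
      simpa [foldl_cons] using key
    rw [e]

lemma rtg_Ptab {l l' : List ℕ} (hnd : l.Nodup) (h : Relation.ReflTransGen KW l l') :
    Ptab l = Ptab l' := by
  induction h with
  | refl => rfl
  | tail h1 h2 ih => exact ih.trans (KW_Ptab ((rtg_perm h1).nodup_iff.1 hnd) h2)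

/-- second-phase move: slide `x` rightwards through a block of large elements. -/
lemma moveL2 : ∀ (Bl : List ℕ) (g x : ℕ) (p s : List ℕ), x < g → (∀ e ∈ Bl, g < e) →
    Bl.Pairwise (· < ·) →
    Relation.ReflTransGen KW (p ++ g :: x :: (Bl ++ s)) (p ++ g :: (Bl ++ x :: s))
  | [], g, x, p, s, _, _, _ => by
      simp only [nil_append]
      exact Relation.ReflTransGen.refl
  | e :: Bl, g, x, p, s, hxg, hge, hp => by
      have hstep : KW (p ++ g :: x :: (e :: Bl ++ s)) (p ++ g :: e :: x :: (Bl ++ s)) := by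
        refine Or.inl ⟨p, g, x, e, Bl ++ s, Or.inl ⟨hxg, hge e (by simp)⟩, by simp, by simp⟩
      have ih := moveL2 Bl e x (p ++ [g]) s (hxg.trans (hge e (by simp)))
        (fun u hu => (pairwise_cons.1 hp).1 u hu) (pairwise_cons.1 hp).2
      refine Relation.ReflTransGen.head hstep ?_
      have h1 : (p ++ [g]) ++ e :: x :: (Bl ++ s) = p ++ g :: e :: x :: (Bl ++ s) := by simp
      have h2 : (p ++ [g]) ++ e :: (Bl ++ x :: s) = p ++ g :: (e :: Bl ++ x :: s) := by simp
      rw [h1, h2] at ih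
      exact ih

/-- first-phase move: slide `b` rightwards through a block of small elements. -/
lemma moveL1 : ∀ (Al : List ℕ) (b x : ℕ) (p s : List ℕ), (∀ a ∈ Al, a < x) → x < b →
    Al.Pairwise (· < ·) →
    Relation.ReflTransGen KW (p ++ b :: (Al ++ x :: s)) (p ++ (Al ++ b :: x :: s))
  | [], b, x, p, s, _, _, _ => by
      simp only [nil_append]
      exact Relation.ReflTransGen.refl
  | a :: Al, b, x, p, s, hax, hxb, hp => by
      obtain ⟨h0, t0, ht, hah0, hh0b⟩ :
          ∃ h0 t0, Al ++ x :: s = h0 :: t0 ∧ a < h0 ∧ h0 < b := by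
        rcases Al with _ | ⟨a2, Al'⟩
        · exact ⟨x, s, rfl, hax a (by simp), hxb⟩
        · exact ⟨a2, Al' ++ x :: s, rfl, (pairwise_cons.1 hp).1 a2 (by simp),
            (hax a2 (by simp)).trans hxb⟩
      have hstep : KW (p ++ b :: (a :: Al ++ x :: s)) (p ++ a :: b :: (Al ++ x :: s)) := by
        refine Or.inr ⟨p, b, a, h0, t0, Or.inr ⟨hah0, hh0b⟩, by simp [ht], by simp [ht]⟩
      have ih := moveL1 Al b x (p ++ [a]) s (fun u hu => hax u (by simp [hu])) hxb
        (pairwise_cons.1 hp).2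
      refine Relation.ReflTransGen.head hstep ?_
      have h1 : (p ++ [a]) ++ b :: (Al ++ x :: s) = p ++ a :: b :: (Al ++ x :: s) := by simp
      have h2 : (p ++ [a]) ++ (Al ++ b :: x :: s) = p ++ (a :: Al ++ b :: x :: s) := by simp
      rw [h1, h2] at ih
      exact ih

/-- Row reading word (bottom row first). -/
def rword (T : List (List ℕ)) : List ℕ := T.reverse.flatten

lemma rword_cons (R : List ℕ) (T' : List (List ℕ)) : rword (R :: T') = rword T' ++ R := by
  simp [rword]

lemma rword_insert : ∀ (T : List (List ℕ)) (x : ℕ), Inv T → x ∉ T.flatten →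
    Relation.ReflTransGen KW (rword T ++ [x]) (rword (insertTab T x))
  | [], x, _, _ => by
      rw [show rword (insertTab [] x) = rword [] ++ [x] by simp [rword, insertTab]]
  | R :: T', x, hT, hx => by
      have hR : R.Pairwise (· < ·) := hT.1 R (mem_cons_self)
      have hnd : (R ++ T'.flatten).Nodup := by simpa using hT.2
      have hdisj := disjoint_of_nodup_append hnd
      have hxR : x ∉ R := fun h => hx (by simp [h])
      have hIT : Inv T' := ⟨fun S hS => hT.1 S (mem_cons_of_mem _ hS), (nodup_append.1 hnd).2.1⟩
      obtain ⟨A, Bl, rfl, hA, hB⟩ := split2 hR hxR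
      rcases Bl with _ | ⟨b, B'⟩
      · have e : insertRow x (A ++ []) = ((A ++ []) ++ [x], none) :=
          insertRow_last (fun a ha => by have := hA a (by simpa using ha); omega)
        rw [iT_none e, rword_cons, rword_cons]
        rw [show rword T' ++ ((A ++ []) ++ [x]) = (rword T' ++ (A ++ [])) ++ [x] by simp]
      · have e : insertRow x (A ++ b :: B') = (A ++ x :: B', some b) :=
          insertRow_mid (fun a ha => by have := hA a ha; omega) (hB b (by simp)) B'
        rw [iT_some e, rword_cons, rword_cons]
        have hxb : x < b := hB b (by simp)
        have hBp : (b :: B').Pairwise (· < ·) := hR.sublist (sublist_append_right A _)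
        have hbB' : ∀ u ∈ B', b < u := fun u hu => (pairwise_cons.1 hBp).1 u hu
        have hB'p : B'.Pairwise (· < ·) := (pairwise_cons.1 hBp).2
        have hAp : A.Pairwise (· < ·) := (pairwise_append.1 hR).1
        have hbT : b ∉ T'.flatten := fun h => hdisj (by simp) h
        have ihs := rword_insert T' b hIT hbT
        have s2' : Relation.ReflTransGen KW ((rword T' ++ (A ++ b :: B')) ++ [x])
            (rword T' ++ (A ++ b :: x :: B')) := by
          have h := rtg_symm (moveL2 B' b x (rword T' ++ A) [] hxb hbB' hB'p)
          have e1 : (rword T' ++ A) ++ b :: (B' ++ x :: []) = (rword T' ++ (A ++ b :: B')) ++ [x] := by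
            simp
          have e2 : (rword T' ++ A) ++ b :: x :: (B' ++ []) = rword T' ++ (A ++ b :: x :: B') := by
            simp
          rw [e1, e2] at h
          exact h
        have s1' : Relation.ReflTransGen KW (rword T' ++ (A ++ b :: x :: B'))
            ((rword T' ++ [b]) ++ (A ++ x :: B')) := by
          have h := rtg_symm (moveL1 A b x (rword T') B' hA hxb hAp)
          have e3 : rword T' ++ b :: (A ++ x :: B') = (rword T' ++ [b]) ++ (A ++ x :: B') := by
            simp
          rw [e3] at h
          exact h
        have s3' : Relation.ReflTransGen KW ((rword T' ++ [b]) ++ (A ++ x :: B'))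
            (rword (insertTab T' b) ++ (A ++ x :: B')) := by
          have h := rtg_context ([] : List ℕ) (A ++ x :: B') ihs
          simpa using h
        exact (s2'.trans s1').trans s3'

lemma word_to_rword (l : List ℕ) (hl : l.Nodup) :
    Relation.ReflTransGen KW l (rword (Ptab l)) := by
  induction l using List.reverseRecOn with
  | nil => rw [show rword (Ptab []) = [] by simp [Ptab, rword]]
  | append_singleton l x ih =>
      have hnd : l.Nodup := hl.sublist (sublist_append_left _ _)
      have hxl : x ∉ l := by
        rw [nodup_append] at hl
        exact fun h => (hl.2.2 x h x (by simp)) rfl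
      obtain ⟨hInv, hperm⟩ := Ptab_spec l hnd
      have hxP : x ∉ (Ptab l).flatten := fun h => hxl (hperm.mem_iff.1 h)
      have step1 : Relation.ReflTransGen KW (l ++ [x]) (rword (Ptab l) ++ [x]) := by
        have h := rtg_context ([] : List ℕ) [x] (ih hnd)
        simpa using h
      have step2 := rword_insert (Ptab l) x hInv hxP
      have hfin : Ptab (l ++ [x]) = insertTab (Ptab l) x := by
        rw [Ptab_append]
        simp
      rw [hfin]
      exact step1.trans step2

theorem word_main {l l' : List ℕ} (hl : l.Nodup) (hl' : l'.Nodup) :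
    Ptab l = Ptab l' ↔ Relation.ReflTransGen KW l l' := by
  constructor
  · intro h
    exact (word_to_rword l hl).trans (h ▸ rtg_symm (word_to_rword l' hl'))
  · exact fun h => rtg_Ptab hl h


open List Equiv


def olf (w : Equiv.Perm ℤ) : ℕ → ℕ := fun i => (w (i:ℤ)).toNat

lemma oneLine_def (n : ℕ) (w : Equiv.Perm ℤ) :
    oneLine n w = (List.range' 1 n).map (olf w) := by
  unfold oneLine olf
  induction (List.range' 1 n) with
  | nil => rfl
  | cons a l ih => simpa using ih

lemma range'_split3 (a k m : ℕ) :
    List.range' a (k + 2 + m) = List.range' a k ++ (a+k) :: (a+k+1) :: List.range' (a+k+2) m := by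
  have h1 := List.range'_append (s := a) (m := k) (n := m+2) (step := 1)
  rw [Nat.one_mul] at h1
  have h2 := List.range'_succ (s := a + k) (n := m+1) (step := 1)
  have h3 := List.range'_succ (s := a + k + 1) (n := m) (step := 1)
  rw [show k+2+m = k+(m+2) by omega, ← h1, show m+2 = (m+1)+1 by omega, h2, h3]

lemma range'_concat1 (a k : ℕ) :
    List.range' a (k + 1) = List.range' a k ++ [a + k] := by
  have := List.range'_concat (step := 1) (s := a) (n := k)
  rwa [Nat.one_mul] at this

lemma oneLine_length (n : ℕ) (w : Equiv.Perm ℤ) : (oneLine n w).length = n := by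
  rw [oneLine_def, List.length_map, List.length_range']

lemma oneLine_eq_split {j n : ℕ} (w : Equiv.Perm ℤ) (hj1 : 1 ≤ j) (hj2 : j + 1 ≤ n) :
    oneLine n w = (List.range' 1 (j-1)).map (olf w)
      ++ olf w j :: olf w (j+1) :: (List.range' (j+2) (n-j-1)).map (olf w) := by
  obtain ⟨k, rfl⟩ : ∃ k, j = k + 1 := ⟨j-1, by omega⟩
  obtain ⟨m, hm⟩ : ∃ m, n = k + 2 + m := ⟨n - (k+2), by omega⟩
  subst hm
  rw [oneLine_def, range'_split3 1 k m]
  simp only [map_append, map_cons]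
  rw [show (1:ℕ)+k = k+1 by omega, show k+1-1 = k by omega, show k+2+m-(k+1)-1 = m by omega]

lemma Sgrp_vals {n : ℕ} {w : Equiv.Perm ℤ} (hw : w ∈ Sgrp n) :
    ∀ i : ℤ, 1 ≤ i → i ≤ (n:ℤ) → 1 ≤ w i ∧ w i ≤ (n:ℤ) := by
  intro i h1 h2
  rcases lt_or_ge (w i) 1 with h | h
  · have h3 := hw (w i) (Or.inl h)
    have h4 : w i = i := w.injective h3
    omega
  rcases le_or_gt (w i) (n:ℤ) with h' | h'
  · exact ⟨h, h'⟩
  · have h3 := hw (w i) (Or.inr h')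
    have h4 : w i = i := w.injective h3
    omega

lemma Sgrp_mul {n j : ℕ} {w : Equiv.Perm ℤ} (hw : w ∈ Sgrp n) (hj1 : 1 ≤ j)
    (hj2 : j + 1 ≤ n) : w * aswap j ∈ Sgrp n := by
  intro i hi
  have hj1' : (1:ℤ) ≤ (j:ℤ) := by exact_mod_cast hj1
  have hj2' : (j:ℤ) + 1 ≤ (n:ℤ) := by exact_mod_cast hj2
  have h1 : i ≠ (j:ℤ) := by rcases hi with h | h <;> omega
  have h2 : i ≠ (j:ℤ) + 1 := by rcases hi with h | h <;> omega
  have e : (w * aswap j) i = w i := by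
    rw [Equiv.Perm.mul_apply, aswap, Equiv.swap_apply_of_ne_of_ne h1 h2]
  rw [e]
  exact hw i hi

lemma oneLine_swap {j n : ℕ} (w : Equiv.Perm ℤ) (hj1 : 1 ≤ j) (hj2 : j + 1 ≤ n) :
    oneLine n (w * aswap j) = (List.range' 1 (j-1)).map (olf w)
      ++ olf w (j+1) :: olf w j :: (List.range' (j+2) (n-j-1)).map (olf w) := by
  rw [oneLine_eq_split (w * aswap j) hj1 hj2]
  have e1 : (List.range' 1 (j-1)).map (olf (w * aswap j))
      = (List.range' 1 (j-1)).map (olf w) := by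
    refine map_inj_left.2 (fun a ha => ?_)
    rw [mem_range'_1] at ha
    have ha' : (a:ℤ) < (j:ℤ) := by exact_mod_cast (by omega : a < j)
    unfold olf
    rw [Equiv.Perm.mul_apply, aswap,
      Equiv.swap_apply_of_ne_of_ne (by omega) (by omega)]
  have e3 : (List.range' (j+2) (n-j-1)).map (olf (w * aswap j))
      = (List.range' (j+2) (n-j-1)).map (olf w) := by
    refine map_inj_left.2 (fun a ha => ?_)
    rw [mem_range'_1] at ha
    have ha' : (j:ℤ) + 2 ≤ (a:ℤ) := by exact_mod_cast (by omega : j + 2 ≤ a)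
    unfold olf
    rw [Equiv.Perm.mul_apply, aswap,
      Equiv.swap_apply_of_ne_of_ne (by omega) (by omega)]
  have m1 : olf (w * aswap j) j = olf w (j+1) := by
    unfold olf
    rw [Equiv.Perm.mul_apply, aswap, Equiv.swap_apply_left]
    norm_cast
  have m2 : olf (w * aswap j) (j+1) = olf w j := by
    unfold olf
    rw [show ((j+1:ℕ):ℤ) = (j:ℤ) + 1 by push_cast; ring,
      Equiv.Perm.mul_apply, aswap, Equiv.swap_apply_right]
  rw [e1, e3, m1, m2]

lemma oneLine_nodup {n : ℕ} {w : Equiv.Perm ℤ} (hw : w ∈ Sgrp n) : (oneLine n w).Nodup := by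
  rw [oneLine_def]
  refine List.Nodup.map_on ?_ List.nodup_range'
  intro a ha b hb hfe
  rw [mem_range'_1] at ha hb
  have pa := Sgrp_vals hw (a:ℤ) (by exact_mod_cast ha.1) (by exact_mod_cast (by omega : a ≤ n))
  have pb := Sgrp_vals hw (b:ℤ) (by exact_mod_cast hb.1) (by exact_mod_cast (by omega : b ≤ n))
  unfold olf at hfe
  have : w (a:ℤ) = w (b:ℤ) := by omega
  exact_mod_cast w.injective this

lemma oneLine_inj {n : ℕ} {w v : Equiv.Perm ℤ} (hw : w ∈ Sgrp n) (hv : v ∈ Sgrp n)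
    (h : oneLine n w = oneLine n v) : w = v := by
  apply Equiv.ext
  intro i
  by_cases hi : 1 ≤ i ∧ i ≤ (n:ℤ)
  · rw [oneLine_def, oneLine_def] at h
    have hmem : i.toNat ∈ List.range' 1 n := by
      rw [mem_range'_1]
      omega
    have he := map_inj_left.1 h i.toNat hmem
    unfold olf at he
    have hc : ((i.toNat : ℕ) : ℤ) = i := Int.toNat_of_nonneg (by omega)
    rw [hc] at he
    have pa := Sgrp_vals hw i hi.1 hi.2
    have pb := Sgrp_vals hv i hi.1 hi.2
    omega
  · have hi' : i < 1 ∨ (n:ℤ) < i := by omega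
    rw [hw i hi', hv i hi']


lemma pre_split {j n : ℕ} (hj2' : 2 ≤ j) :
    List.range' 1 (j-1) = List.range' 1 (j-2) ++ [j-1] := by
  have h := range'_concat1 1 (j-2)
  rw [show (j-2)+1 = j-1 by omega] at h
  rw [h, show 1 + (j-2) = j - 1 by omega]

lemma suf_split {j n : ℕ} (hjn : j + 2 ≤ n) :
    List.range' (j+2) (n-j-1) = (j+2) :: List.range' (j+3) (n-j-2) := by
  have h := List.range'_succ (s := j+2) (n := n-j-2) (step := 1)
  rw [show (n-j-2)+1 = n-j-1 by omega] at h
  rw [h]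

lemma bridge1 {n : ℕ} {w v : Equiv.Perm ℤ} (hw : w ∈ Sgrp n) (h : KnuthStep n w v) :
    v ∈ Sgrp n ∧ KW (oneLine n w) (oneLine n v) := by
  obtain ⟨j, hj1, hj2, rfl, hcase⟩ := h
  refine ⟨Sgrp_mul hw hj1 hj2, ?_⟩
  have hsw := oneLine_swap w hj1 hj2
  have hsp := oneLine_eq_split w hj1 hj2
  have hj2z : (j:ℤ) + 1 ≤ (n:ℤ) := by exact_mod_cast hj2
  have hj1z : (1:ℤ) ≤ (j:ℤ) := by exact_mod_cast hj1
  have pj := Sgrp_vals hw (j:ℤ) (by omega) (by omega)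
  have pj1 := Sgrp_vals hw ((j:ℤ)+1) (by omega) (by omega)
  rcases hcase with ⟨hj2', hbtw⟩ | ⟨hjn, hbtw⟩
  · have hj2z' : (2:ℤ) ≤ (j:ℤ) := by exact_mod_cast hj2'
    have pj0 := Sgrp_vals hw ((j:ℤ)-1) (by omega) (by omega)
    have hpre := pre_split (n := n) hj2'
    refine Or.inl ⟨(List.range' 1 (j-2)).map (olf w), olf w (j-1), olf w j, olf w (j+1),
      (List.range' (j+2) (n-j-1)).map (olf w), ?_, ?_, ?_⟩
    · unfold olf Btw
      unfold StrictlyBetween at hbtw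
      have hc : ((j-1:ℕ):ℤ) = (j:ℤ) - 1 := by omega
      have hc1 : ((j+1:ℕ):ℤ) = (j:ℤ) + 1 := by push_cast; ring
      rw [hc, hc1]
      omega
    · rw [hsp, hpre]
      simp
    · rw [hsw, hpre]
      simp
  · have hjnz : (j:ℤ) + 2 ≤ (n:ℤ) := by exact_mod_cast hjn
    have pj2 := Sgrp_vals hw ((j:ℤ)+2) (by omega) (by omega)
    have hsuf := suf_split hjn
    refine Or.inr ⟨(List.range' 1 (j-1)).map (olf w), olf w j, olf w (j+1), olf w (j+2),
      (List.range' (j+3) (n-j-2)).map (olf w), ?_, ?_, ?_⟩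
    · unfold olf Btw
      unfold StrictlyBetween at hbtw
      have hc : ((j+2:ℕ):ℤ) = (j:ℤ) + 2 := by omega
      have hc1 : ((j+1:ℕ):ℤ) = (j:ℤ) + 1 := by push_cast; ring
      rw [hc, hc1]
      omega
    · rw [hsp, hsuf]
      simp
    · rw [hsw, hsuf]
      simp

lemma bridge2 {n : ℕ} {w : Equiv.Perm ℤ} {m : List ℕ} (hw : w ∈ Sgrp n)
    (h : KW (oneLine n w) m) :
    ∃ v, v ∈ Sgrp n ∧ oneLine n v = m ∧ KnuthStep n w v := by
  rcases h with ⟨p, a, b, c, s, hb, h1, h2⟩ | ⟨p, b, c, d, s, hb, h1, h2⟩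
  · set j := p.length + 2 with hj
    have hlen : n = p.length + 3 + s.length := by
      have hl := congrArg List.length h1
      rw [oneLine_length] at hl
      simp at hl
      omega
    have hj1 : 1 ≤ j := by omega
    have hj2 : j + 1 ≤ n := by omega
    have hj2' : 2 ≤ j := by omega
    have hsp := oneLine_eq_split w hj1 hj2
    have hpre := pre_split (n := n) hj2'
    have hsplit : (p ++ [a]) ++ b :: c :: s
        = ((List.range' 1 (j-2)).map (olf w) ++ [olf w (j-1)])
          ++ olf w j :: olf w (j+1) :: (List.range' (j+2) (n-j-1)).map (olf w) := by
      rw [show (p ++ [a]) ++ b :: c :: s = p ++ a :: b :: c :: s by simp, ← h1, hsp, hpre]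
      simp
    have hlen2 : (p ++ [a]).length
        = ((List.range' 1 (j-2)).map (olf w) ++ [olf w (j-1)]).length := by
      simp [List.length_range']
      omega
    obtain ⟨hL, hR⟩ := List.append_inj hsplit hlen2
    obtain ⟨hp', ha'⟩ := List.append_inj' hL (by simp)
    have ha : a = olf w (j-1) := by simpa using ha'
    simp only [List.cons.injEq] at hR
    obtain ⟨hbb, hcc, hss⟩ := hR
    -- positivity
    have hj1z : (1:ℤ) ≤ (j:ℤ) := by exact_mod_cast hj1
    have hj2z : (j:ℤ) + 1 ≤ (n:ℤ) := by exact_mod_cast hj2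
    have hj2z' : (2:ℤ) ≤ (j:ℤ) := by exact_mod_cast hj2'
    have pj := Sgrp_vals hw (j:ℤ) (by omega) (by omega)
    have pj1 := Sgrp_vals hw ((j:ℤ)+1) (by omega) (by omega)
    have pj0 := Sgrp_vals hw ((j:ℤ)-1) (by omega) (by omega)
    refine ⟨w * aswap j, Sgrp_mul hw hj1 hj2, ?_, ?_⟩
    · rw [oneLine_swap w hj1 hj2, hpre, h2, hp', ha, hbb, hcc, hss]
      simp
    · refine ⟨j, hj1, hj2, rfl, Or.inl ⟨hj2', ?_⟩⟩
      unfold Btw at hb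
      unfold StrictlyBetween
      rw [ha, hbb, hcc] at hb
      unfold olf at hb
      have hc : ((j-1:ℕ):ℤ) = (j:ℤ) - 1 := by omega
      have hc1 : ((j+1:ℕ):ℤ) = (j:ℤ) + 1 := by push_cast; ring
      rw [hc, hc1] at hb
      omega
  · set j := p.length + 1 with hj
    have hlen : n = p.length + 3 + s.length := by
      have hl := congrArg List.length h1
      rw [oneLine_length] at hl
      simp at hl
      omega
    have hj1 : 1 ≤ j := by omega
    have hj2 : j + 1 ≤ n := by omega
    have hjn : j + 2 ≤ n := by omega
    have hsp := oneLine_eq_split w hj1 hj2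
    have hsuf := suf_split hjn
    have hsplit : p ++ b :: c :: d :: s
        = ((List.range' 1 (j-1)).map (olf w))
          ++ olf w j :: olf w (j+1) :: olf w (j+2)
            :: (List.range' (j+3) (n-j-2)).map (olf w) := by
      rw [← h1, hsp, hsuf]
      simp
    have hlen2 : p.length = ((List.range' 1 (j-1)).map (olf w)).length := by
      simp [List.length_range', hj]
    obtain ⟨hL, hR⟩ := List.append_inj hsplit hlen2
    simp only [List.cons.injEq] at hR
    obtain ⟨hbb, hcc, hdd, hss⟩ := hR
    have hj1z : (1:ℤ) ≤ (j:ℤ) := by exact_mod_cast hj1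
    have hjnz : (j:ℤ) + 2 ≤ (n:ℤ) := by exact_mod_cast hjn
    have pj := Sgrp_vals hw (j:ℤ) (by omega) (by omega)
    have pj1 := Sgrp_vals hw ((j:ℤ)+1) (by omega) (by omega)
    have pj2 := Sgrp_vals hw ((j:ℤ)+2) (by omega) (by omega)
    refine ⟨w * aswap j, Sgrp_mul hw hj1 hj2, ?_, ?_⟩
    · rw [oneLine_swap w hj1 hj2, hsuf, h2, hL, hbb, hcc, hdd, hss]
      simp
    · refine ⟨j, hj1, hj2, rfl, Or.inr ⟨hjn, ?_⟩⟩
      unfold Btw at hb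
      unfold StrictlyBetween
      rw [hbb, hcc, hdd] at hb
      unfold olf at hb
      have hc : ((j+2:ℕ):ℤ) = (j:ℤ) + 2 := by omega
      have hc1 : ((j+1:ℕ):ℤ) = (j:ℤ) + 1 := by push_cast; ring
      rw [hc, hc1] at hb
      omega


lemma lift_chain {n : ℕ} {v : Equiv.Perm ℤ} (hv : v ∈ Sgrp n) :
    ∀ {l}, Relation.ReflTransGen KW l (oneLine n v) →
    ∀ u, u ∈ Sgrp n → oneLine n u = l → Relation.ReflTransGen (KnuthStep n) u v := by
  intro l h
  induction h using Relation.ReflTransGen.head_induction_on with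
  | refl =>
      intro u hu he
      rw [oneLine_inj hu hv he]
  | head h' _ ih =>
      intro u hu he
      obtain ⟨u', hu', he', hk⟩ := bridge2 hu (he ▸ h')
      exact Relation.ReflTransGen.head hk (ih u' hu' he')

end RSKx

/-- Two permutations in `S_n` have the same Robinson–Schensted insertion tableau
iff they are connected by a sequence of Knuth relations. -/
theorem same_P_iff_knuth_connected (n : ℕ) (w v : Equiv.Perm ℤ)
    (hw : w ∈ Sgrp n) (hv : v ∈ Sgrp n) :
    Ptab (oneLine n w) = Ptab (oneLine n v) ↔
      Relation.ReflTransGen (KnuthStep n) w v := by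
  constructor
  · intro h
    have hchain := (RSKx.word_main (RSKx.oneLine_nodup hw) (RSKx.oneLine_nodup hv)).1 h
    exact RSKx.lift_chain hv hchain w hw rfl
  · intro h
    have key : ∀ u, Relation.ReflTransGen (KnuthStep n) w u →
        u ∈ Sgrp n ∧ Ptab (oneLine n w) = Ptab (oneLine n u) := by
      intro u hchain
      induction hchain with
      | refl => exact ⟨hw, rfl⟩
      | tail _ h2 ih =>
          obtain ⟨hmem, heq⟩ := ih
          obtain ⟨hmem', hkw⟩ := RSKx.bridge1 hmem h2
          exact ⟨hmem', heq.trans (RSKx.KW_Ptab (RSKx.oneLine_nodup hmem) hkw)⟩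
    exact (key v h).2
end

section
/- For a signed permutation w ∈ W_n and 1 ≤ k ≤ n-1, w lies in the domain D^k_{IN}(W_n) of the operator T^k_{IN} if and only if w(k) and w(k+1) have opposite signs. -/
/-- The signed transposition `s_j` of type `B`: swaps `j ↔ j+1` and `-j ↔ -(j+1)`. -/
def sgen (j : ℕ) : Equiv.Perm ℤ :=
  Equiv.swap (j : ℤ) ((j : ℤ) + 1) * Equiv.swap (-(j : ℤ)) (-((j : ℤ) + 1))

/-- The sign change `t_j`: swaps `j ↔ -j`, i.e. changes the sign of the `j`-th entry. -/
def tgen (j : ℕ) : Equiv.Perm ℤ := Equiv.swap (j : ℤ) (-(j : ℤ))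

/-- The hyperoctahedral group `W_n`: permutations `w` of `{±1, …, ±n}` with `w(-i) = -w(i)`,
realized as permutations of `ℤ` commuting with negation and fixing `i` with `|i| > n`. -/
def Wgrp (n : ℕ) : Set (Equiv.Perm ℤ) :=
  {w | (∀ i : ℤ, w (-i) = - w i) ∧ ∀ i : ℤ, (n : ℤ) < |i| → w i = i}

/-- Coxeter length on `W_n` with respect to the simple reflections
`s_1, …, s_{n-1}, t_1`: minimal length of a word in these generators. -/
noncomputable def lenB (n : ℕ) (w : Equiv.Perm ℤ) : ℕ :=
  sInf {k | ∃ l : List (Equiv.Perm ℤ), l.length = k ∧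
    (∀ g ∈ l, (∃ j : ℕ, 1 ≤ j ∧ j < n ∧ g = sgen j) ∨ g = tgen 1) ∧ l.prod = w}

/-- `α_{k+1} ∈ τ^k(w)`, i.e. `ℓ(w s_k) < ℓ(w)` where `s_k = s_{α_{k+1}}`. -/
noncomputable def InTauS (n k : ℕ) (w : Equiv.Perm ℤ) : Prop :=
  lenB n (w * sgen k) < lenB n w

/-- `α'_k ∈ τ^k(w)`, i.e. `ℓ(w t_k) < ℓ(w)` where `t_k = s_{α'_k}`. -/
noncomputable def InTauT (n k : ℕ) (w : Equiv.Perm ℤ) : Prop :=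
  lenB n (w * tgen k) < lenB n w


set_option maxHeartbeats 1000000

lemma sgen_apply (j : ℕ) (hj : 1 ≤ j) (x : ℤ) :
    sgen j x = if x = (j:ℤ) then (j:ℤ)+1 else if x = (j:ℤ)+1 then (j:ℤ) else
      if x = -(j:ℤ) then -((j:ℤ)+1) else if x = -((j:ℤ)+1) then -(j:ℤ) else x := by
  have hj' : (1:ℤ) ≤ (j:ℤ) := by exact_mod_cast hj
  simp only [sgen, Equiv.Perm.mul_apply, Equiv.swap_apply_def]
  split_ifs <;> omega

lemma tgen_apply (k : ℕ) (x : ℤ) :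
    tgen k x = if x = (k:ℤ) then -(k:ℤ) else if x = -(k:ℤ) then (k:ℤ) else x := by
  simp only [tgen, Equiv.swap_apply_def]

lemma sgen_sgen (j : ℕ) (hj : 1 ≤ j) (x : ℤ) : sgen j (sgen j x) = x := by
  have hj' : (1:ℤ) ≤ (j:ℤ) := by exact_mod_cast hj
  simp only [sgen_apply j hj]
  split_ifs <;> omega

lemma tgen_tgen (k : ℕ) (x : ℤ) : tgen k (tgen k x) = x := by
  simp only [tgen_apply]
  split_ifs <;> omega

lemma sgen_neg (j : ℕ) (hj : 1 ≤ j) (x : ℤ) : sgen j (-x) = -(sgen j x) := by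
  have hj' : (1:ℤ) ≤ (j:ℤ) := by exact_mod_cast hj
  simp only [sgen_apply j hj]
  split_ifs <;> omega

lemma tgen_neg (k : ℕ) (x : ℤ) : tgen k (-x) = -(tgen k x) := by
  simp only [tgen_apply]
  split_ifs <;> omega

lemma sgen_mul_self (j : ℕ) (hj : 1 ≤ j) : sgen j * sgen j = 1 := by
  ext x
  simp [Equiv.Perm.mul_apply, sgen_sgen j hj]

lemma tgen_mul_self (k : ℕ) : tgen k * tgen k = 1 := by
  ext x
  simp [Equiv.Perm.mul_apply, tgen_tgen k]


lemma Wgrp.zero {n : ℕ} {w : Equiv.Perm ℤ} (hw : w ∈ Wgrp n) : w 0 = 0 := by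
  have := hw.1 0
  simp at this
  omega

lemma Wgrp.ne_zero {n : ℕ} {w : Equiv.Perm ℤ} (hw : w ∈ Wgrp n) {i : ℤ} (hi : i ≠ 0) :
    w i ≠ 0 := by
  intro h
  exact hi (w.injective (h.trans (Wgrp.zero hw).symm))

lemma Wgrp.abs_le {n : ℕ} {w : Equiv.Perm ℤ} (hw : w ∈ Wgrp n) {i : ℤ}
    (hi : |i| ≤ (n:ℤ)) : |w i| ≤ (n:ℤ) := by
  by_contra h
  push_neg at h
  have h2 := hw.2 (w i) h
  have := w.injective h2
  rcases abs_cases i with ⟨h1,h2'⟩|⟨h1,h2'⟩ <;> rcases abs_cases (w i) with ⟨h3,h4⟩|⟨h3,h4⟩ <;> omega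

lemma Wgrp.mul_sgen {n j : ℕ} {w : Equiv.Perm ℤ} (hw : w ∈ Wgrp n) (hj : 1 ≤ j)
    (hjn : j < n) : w * sgen j ∈ Wgrp n := by
  constructor
  · intro i
    simp only [Equiv.Perm.mul_apply, sgen_neg j hj, hw.1]
  · intro i hi
    have hj' : (1:ℤ) ≤ (j:ℤ) := by exact_mod_cast hj
    have hjn' : (j:ℤ) < (n:ℤ) := by exact_mod_cast hjn
    have hs : sgen j i = i := by
      rw [sgen_apply j hj]
      rcases abs_cases i with ⟨h1,h2⟩|⟨h1,h2⟩ <;> split_ifs <;> omega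
    simp only [Equiv.Perm.mul_apply, hs]
    exact hw.2 i hi

lemma Wgrp.mul_tgen {n k : ℕ} {w : Equiv.Perm ℤ} (hw : w ∈ Wgrp n) (hkn : k ≤ n) :
    w * tgen k ∈ Wgrp n := by
  constructor
  · intro i
    simp only [Equiv.Perm.mul_apply, tgen_neg k, hw.1]
  · intro i hi
    have hkn' : (k:ℤ) ≤ (n:ℤ) := by exact_mod_cast hkn
    have ht : tgen k i = i := by
      rw [tgen_apply]
      rcases abs_cases i with ⟨h1,h2⟩|⟨h1,h2⟩ <;> split_ifs <;> omega
    simp only [Equiv.Perm.mul_apply, ht]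
    exact hw.2 i hi

lemma Wgrp.one {n : ℕ} : (1 : Equiv.Perm ℤ) ∈ Wgrp n := by
  constructor <;> simp

/-- Index pairs. -/
noncomputable def PB (n : ℕ) : Finset (ℤ × ℤ) := Finset.Icc 1 (n:ℤ) ×ˢ Finset.Icc 1 (n:ℤ)

/-- Contribution of a pair to the type B length statistic. -/
def termB (w : Equiv.Perm ℤ) (p : ℤ × ℤ) : ℕ :=
  (if p.1 < p.2 ∧ w p.2 < w p.1 then 1 else 0) +
  (if p.1 ≤ p.2 ∧ w p.1 + w p.2 < 0 then 1 else 0)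

/-- Type B length statistic. -/
noncomputable def LBfun (n : ℕ) (w : Equiv.Perm ℤ) : ℕ := ∑ p ∈ PB n, termB w p

lemma LB_one (n : ℕ) : LBfun n 1 = 0 := by
  refine Finset.sum_eq_zero fun p hp => ?_
  simp only [PB, Finset.mem_product, Finset.mem_Icc] at hp
  simp only [termB]
  rw [if_neg (by simp only [Equiv.Perm.one_apply]; omega), if_neg (by simp only [Equiv.Perm.one_apply]; omega), Nat.add_zero]


lemma LB_sgen_asc (n j : ℕ) (hj : 1 ≤ j) (hjn : j < n) (w : Equiv.Perm ℤ)
    (h : w (j:ℤ) < w ((j:ℤ)+1)) : LBfun n (w * sgen j) = LBfun n w + 1 := by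
  have hj' : (1:ℤ) ≤ (j:ℤ) := by exact_mod_cast hj
  have hjn' : (j:ℤ) < (n:ℤ) := by exact_mod_cast hjn
  have hmem : ∀ a : ℤ, a ∈ Finset.Icc 1 (n:ℤ) → sgen j a ∈ Finset.Icc 1 (n:ℤ) := by
    intro a ha
    rw [Finset.mem_Icc] at *
    rw [sgen_apply j hj]
    split_ifs <;> try omega
  have hre : LBfun n (w * sgen j) = ∑ p ∈ PB n,
      ((if sgen j p.1 < sgen j p.2 ∧ w p.2 < w p.1 then 1 else 0) +
       (if sgen j p.1 ≤ sgen j p.2 ∧ w p.1 + w p.2 < 0 then 1 else 0)) := by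
    rw [LBfun]
    refine Finset.sum_nbij' (i := fun p => (sgen j p.1, sgen j p.2))
      (j := fun p => (sgen j p.1, sgen j p.2)) ?_ ?_ ?_ ?_ ?_
    · intro p hp
      simp only [PB, Finset.mem_product] at *
      exact ⟨hmem _ hp.1, hmem _ hp.2⟩
    · intro p hp
      simp only [PB, Finset.mem_product] at *
      exact ⟨hmem _ hp.1, hmem _ hp.2⟩
    · intro p _
      exact Prod.ext (sgen_sgen j hj p.1) (sgen_sgen j hj p.2)
    · intro p _
      exact Prod.ext (sgen_sgen j hj p.1) (sgen_sgen j hj p.2)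
    · intro p _
      simp only [termB, Equiv.Perm.mul_apply, sgen_sgen j hj]
      rfl
  have hT : (insert ((j:ℤ), (j:ℤ)+1) {((j:ℤ)+1, (j:ℤ))} : Finset (ℤ × ℤ)) ⊆ PB n := by
    intro p hp
    simp only [Finset.mem_insert, Finset.mem_singleton] at hp
    simp only [PB, Finset.mem_product, Finset.mem_Icc]
    rcases hp with rfl | rfl <;> simp <;> omega
  rw [hre, ← Finset.sum_sdiff hT, LBfun, ← Finset.sum_sdiff hT (f := fun p => termB w p)]
  have hagree : ∀ p ∈ PB n \ (insert ((j:ℤ), (j:ℤ)+1) {((j:ℤ)+1, (j:ℤ))} : Finset (ℤ × ℤ)),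
      ((if sgen j p.1 < sgen j p.2 ∧ w p.2 < w p.1 then 1 else 0) +
       (if sgen j p.1 ≤ sgen j p.2 ∧ w p.1 + w p.2 < 0 then 1 else 0)) = termB w p := by
    intro p hp
    obtain ⟨hpP, hpT⟩ := Finset.mem_sdiff.mp hp
    simp only [PB, Finset.mem_product, Finset.mem_Icc] at hpP
    simp only [Finset.mem_insert, Finset.mem_singleton, Prod.ext_iff, not_or, not_and] at hpT
    have hsa : sgen j p.1 = if p.1 = (j:ℤ) then (j:ℤ)+1 else if p.1 = (j:ℤ)+1 then (j:ℤ) else p.1 := by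
      rw [sgen_apply j hj]; split_ifs <;> omega
    have hsb : sgen j p.2 = if p.2 = (j:ℤ) then (j:ℤ)+1 else if p.2 = (j:ℤ)+1 then (j:ℤ) else p.2 := by
      rw [sgen_apply j hj]; split_ifs <;> omega
    simp only [termB, hsa, hsb]
    split_ifs <;> try omega
  rw [Finset.sum_congr rfl hagree]
  have hne : ((j:ℤ), (j:ℤ)+1) ∉ ({((j:ℤ)+1, (j:ℤ))} : Finset (ℤ × ℤ)) := by
    simp [Prod.ext_iff]
  rw [Finset.sum_insert hne, Finset.sum_insert hne, Finset.sum_singleton, Finset.sum_singleton]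
  have hsj : sgen j (j:ℤ) = (j:ℤ)+1 := by rw [sgen_apply j hj]; split_ifs <;> omega
  have hsj1 : sgen j ((j:ℤ)+1) = (j:ℤ) := by rw [sgen_apply j hj]; split_ifs <;> omega
  delta termB
  simp only [termB, hsj, hsj1]
  split_ifs <;> omega

lemma mul_sgen_cancel (j : ℕ) (hj : 1 ≤ j) (w : Equiv.Perm ℤ) :
    (w * sgen j) * sgen j = w := by
  rw [mul_assoc, sgen_mul_self j hj, mul_one]

lemma mul_tgen_cancel (k : ℕ) (w : Equiv.Perm ℤ) :
    (w * tgen k) * tgen k = w := by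
  rw [mul_assoc, tgen_mul_self k, mul_one]

lemma mul_sgen_left (j : ℕ) (hj : 1 ≤ j) (w : Equiv.Perm ℤ) :
    (w * sgen j) (j:ℤ) = w ((j:ℤ)+1) := by
  have : sgen j (j:ℤ) = (j:ℤ)+1 := by
    have hj' : (1:ℤ) ≤ (j:ℤ) := by exact_mod_cast hj
    rw [sgen_apply j hj]; split_ifs <;> omega
  simp [Equiv.Perm.mul_apply, this]

lemma mul_sgen_right (j : ℕ) (hj : 1 ≤ j) (w : Equiv.Perm ℤ) :
    (w * sgen j) ((j:ℤ)+1) = w (j:ℤ) := by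
  have : sgen j ((j:ℤ)+1) = (j:ℤ) := by
    have hj' : (1:ℤ) ≤ (j:ℤ) := by exact_mod_cast hj
    rw [sgen_apply j hj]; split_ifs <;> omega
  simp [Equiv.Perm.mul_apply, this]

lemma LB_sgen_desc (n j : ℕ) (hj : 1 ≤ j) (hjn : j < n) (w : Equiv.Perm ℤ)
    (h : w ((j:ℤ)+1) < w (j:ℤ)) : LBfun n (w * sgen j) + 1 = LBfun n w := by
  have := LB_sgen_asc n j hj hjn (w * sgen j)
    (by rw [mul_sgen_left j hj, mul_sgen_right j hj]; exact h)
  rw [mul_sgen_cancel j hj] at this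
  omega

lemma mul_tgen_window {n k : ℕ} (w : Equiv.Perm ℤ) (hodd : ∀ i : ℤ, w (-i) = - w i)
    {a : ℤ} (ha : a ∈ Finset.Icc 1 (n:ℤ)) :
    (w * tgen k) a = if a = (k:ℤ) then -(w (k:ℤ)) else w a := by
  rw [Finset.mem_Icc] at ha
  rw [Equiv.Perm.mul_apply, tgen_apply]
  split_ifs with h1 h2
  · rw [← hodd]
  · exact absurd h2 (by omega)
  · rfl

lemma LB_tgen_lt (n k : ℕ) (hk : 1 ≤ k) (hkn : k ≤ n) (w : Equiv.Perm ℤ)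
    (hodd : ∀ i : ℤ, w (-i) = - w i) (h : 0 < w (k:ℤ)) :
    LBfun n w < LBfun n (w * tgen k) := by
  have hk' : (1:ℤ) ≤ (k:ℤ) := by exact_mod_cast hk
  have hkn' : (k:ℤ) ≤ (n:ℤ) := by exact_mod_cast hkn
  have hmemk : (k:ℤ) ∈ Finset.Icc 1 (n:ℤ) := Finset.mem_Icc.mpr ⟨hk', hkn'⟩
  refine Finset.sum_lt_sum ?_ ⟨((k:ℤ), (k:ℤ)), ?_, ?_⟩
  · intro p hp
    obtain ⟨a, b⟩ := p
    simp only [PB, Finset.mem_product] at hp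
    rw [termB, termB]
    simp only
    rw [mul_tgen_window (n := n) w hodd hp.1, mul_tgen_window (n := n) w hodd hp.2]
    rw [Finset.mem_Icc, Finset.mem_Icc] at hp
    split_ifs <;> subst_vars <;> omega
  · simp only [PB, Finset.mem_product]
    exact ⟨hmemk, hmemk⟩
  · rw [termB, termB]
    simp only
    rw [mul_tgen_window (n := n) w hodd hmemk]
    split_ifs <;> omega

lemma LB_tgen_gt (n k : ℕ) (hk : 1 ≤ k) (hkn : k ≤ n) (w : Equiv.Perm ℤ)
    (hodd : ∀ i : ℤ, w (-i) = - w i) (h : w (k:ℤ) < 0) :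
    LBfun n (w * tgen k) < LBfun n w := by
  have hodd' : ∀ i : ℤ, (w * tgen k) (-i) = - (w * tgen k) i := by
    intro i
    simp only [Equiv.Perm.mul_apply, tgen_neg, hodd]
  have hpos : 0 < (w * tgen k) (k:ℤ) := by
    have : tgen k (k:ℤ) = -(k:ℤ) := by rw [tgen_apply]; simp
    rw [Equiv.Perm.mul_apply, this, hodd]
    omega
  have := LB_tgen_lt n k hk hkn (w * tgen k) hodd' hpos
  rwa [mul_tgen_cancel k w] at this

lemma LB_t1_pos (n : ℕ) (hn : 1 ≤ n) (w : Equiv.Perm ℤ)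
    (hodd : ∀ i : ℤ, w (-i) = - w i) (h : 0 < w 1) :
    LBfun n (w * tgen 1) = LBfun n w + 1 := by
  have hn' : (1:ℤ) ≤ (n:ℤ) := by exact_mod_cast hn
  have hmem1 : (1:ℤ) ∈ Finset.Icc 1 (n:ℤ) := Finset.mem_Icc.mpr ⟨le_refl _, hn'⟩
  have hT : ({((1:ℤ), (1:ℤ))} : Finset (ℤ × ℤ)) ⊆ PB n := by
    intro p hp
    simp only [Finset.mem_singleton] at hp
    simp only [PB, Finset.mem_product]
    rw [hp]
    exact ⟨hmem1, hmem1⟩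
  rw [LBfun, LBfun, ← Finset.sum_sdiff hT, ← Finset.sum_sdiff hT (f := fun p => termB w p)]
  have hagree : ∀ p ∈ PB n \ ({((1:ℤ), (1:ℤ))} : Finset (ℤ × ℤ)),
      termB (w * tgen 1) p = termB w p := by
    intro p hp
    obtain ⟨hpP, hpT⟩ := Finset.mem_sdiff.mp hp
    obtain ⟨a, b⟩ := p
    simp only [PB, Finset.mem_product] at hpP
    simp only [Finset.mem_singleton, Prod.ext_iff, not_and] at hpT
    rw [termB, termB]
    simp only
    rw [mul_tgen_window (n := n) w hodd hpP.1, mul_tgen_window (n := n) w hodd hpP.2]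
    rw [Finset.mem_Icc] at hpP
    simp only [Nat.cast_one] at *
    split_ifs <;> subst_vars <;> omega
  rw [Finset.sum_congr rfl hagree, Finset.sum_singleton, Finset.sum_singleton]
  have hterm : termB (w * tgen 1) ((1:ℤ), (1:ℤ)) = termB w ((1:ℤ), (1:ℤ)) + 1 := by
    rw [termB, termB]
    simp only
    rw [mul_tgen_window (n := n) w hodd hmem1]
    simp only [Nat.cast_one]
    split_ifs <;> omega
  have hrfl : (PB n \ ({((1:ℤ), (1:ℤ))} : Finset (ℤ × ℤ))).sum (termB w)
      = ∑ x ∈ PB n \ ({((1:ℤ), (1:ℤ))} : Finset (ℤ × ℤ)), termB w x := rfl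
  omega

lemma LB_t1_neg (n : ℕ) (hn : 1 ≤ n) (w : Equiv.Perm ℤ)
    (hodd : ∀ i : ℤ, w (-i) = - w i) (h : w 1 < 0) :
    LBfun n (w * tgen 1) + 1 = LBfun n w := by
  have hodd' : ∀ i : ℤ, (w * tgen 1) (-i) = - (w * tgen 1) i := by
    intro i
    simp only [Equiv.Perm.mul_apply, tgen_neg, hodd]
  have hpos : 0 < (w * tgen 1) 1 := by
    have ht : tgen 1 (1:ℤ) = -(1:ℤ) := by rw [tgen_apply]; simp
    rw [Equiv.Perm.mul_apply]
    rw [ht, hodd]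
    omega
  have := LB_t1_pos n hn (w * tgen 1) hodd' hpos
  rw [mul_tgen_cancel 1 w] at this
  omega

lemma eq_one_of_mono (n : ℕ) (w : Equiv.Perm ℤ) (hw : w ∈ Wgrp n)
    (h1 : 0 < w 1)
    (hmono : ∀ j : ℤ, 1 ≤ j → j < (n:ℤ) → w j < w (j+1)) : w = 1 := by
  have key : ∀ i : ℤ, 1 ≤ i → i ≤ (n:ℤ) → w i = i := by
    have hge : ∀ i : ℤ, 1 ≤ i → i ≤ (n:ℤ) → i ≤ w i := by
      refine fun i hi => Int.le_induction (motive := fun i _ => i ≤ (n:ℤ) → i ≤ w i) ?_ ?_ i hi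
      · intro _; omega
      · intro m hm ih hm1
        have := hmono m hm (by omega)
        have := ih (by omega)
        omega
    have hle : ∀ i : ℤ, i ≤ (n:ℤ) → 1 ≤ i → w i ≤ i := by
      refine fun i hi => Int.le_induction_down (motive := fun i _ => 1 ≤ i → w i ≤ i) ?_ ?_ i hi
      · intro _
        have := Wgrp.abs_le hw (i := (n:ℤ)) (le_of_eq (abs_of_nonneg (by omega)))
        rcases abs_cases (w (n:ℤ)) with ⟨h3,h4⟩|⟨h3,h4⟩ <;> omega
      · intro m hm ih hm1
        have h2 := hmono (m-1) hm1 (by omega)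
        rw [sub_add_cancel] at h2
        have := ih (by omega)
        omega
    exact fun i hi hi2 => le_antisymm (hle i hi2 hi) (hge i hi hi2)
  ext i
  simp only [Equiv.Perm.one_apply]
  rcases lt_trichotomy i 0 with hi | rfl | hi
  · rcases le_or_gt (-(n:ℤ)) i with hc | hc
    · have := key (-i) (by omega) (by omega)
      have h2 := hw.1 (-i)
      simp only [neg_neg] at h2
      omega
    · exact hw.2 i (by rw [abs_of_neg hi]; omega)
  · exact Wgrp.zero hw
  · rcases le_or_gt i (n:ℤ) with hc | hc
    · exact key i (by omega) hc
    · exact hw.2 i (by rw [abs_of_pos hi]; omega)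


lemma exists_word (n : ℕ) (hn : 1 ≤ n) : ∀ m : ℕ, ∀ w : Equiv.Perm ℤ, w ∈ Wgrp n →
    LBfun n w = m →
    ∃ l : List (Equiv.Perm ℤ), l.length = m ∧
      (∀ g ∈ l, (∃ j : ℕ, 1 ≤ j ∧ j < n ∧ g = sgen j) ∨ g = tgen 1) ∧ l.prod = w := by
  intro m
  induction m using Nat.strong_induction_on with
  | _ m ih =>
    intro w hw hLB
    by_cases h1 : w = 1
    · subst h1
      rw [LB_one] at hLB
      exact ⟨[], by simp [hLB.symm]⟩
    · by_cases hneg : w 1 < 0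
      · have hstep := LB_t1_neg n hn w hw.1 hneg
        have hw' : w * tgen 1 ∈ Wgrp n := Wgrp.mul_tgen hw hn
        obtain ⟨l, hlen, hvalid, hprod⟩ :=
          ih (LBfun n (w * tgen 1)) (by omega) (w * tgen 1) hw' rfl
        refine ⟨l ++ [tgen 1], ?_, ?_, ?_⟩
        · simp [hlen]; omega
        · intro g hg
          rcases List.mem_append.mp hg with hg | hg
          · exact hvalid g hg
          · simp at hg
            exact Or.inr hg
        · rw [List.prod_append, List.prod_singleton, hprod, mul_tgen_cancel]
      · by_cases hdesc : ∃ j : ℕ, 1 ≤ j ∧ j < n ∧ w ((j:ℤ)+1) < w (j:ℤ)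
        · obtain ⟨j, hj, hjn, hd⟩ := hdesc
          have hstep := LB_sgen_desc n j hj hjn w hd
          have hw' : w * sgen j ∈ Wgrp n := Wgrp.mul_sgen hw hj hjn
          obtain ⟨l, hlen, hvalid, hprod⟩ :=
            ih (LBfun n (w * sgen j)) (by omega) (w * sgen j) hw' rfl
          refine ⟨l ++ [sgen j], ?_, ?_, ?_⟩
          · simp [hlen]; omega
          · intro g hg
            rcases List.mem_append.mp hg with hg | hg
            · exact hvalid g hg
            · simp at hg
              exact Or.inl ⟨j, hj, hjn, hg⟩
          · rw [List.prod_append, List.prod_singleton, hprod, mul_sgen_cancel j hj]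
        · exfalso
          apply h1
          push_neg at hdesc
          refine eq_one_of_mono n w hw ?_ ?_
          · have := Wgrp.ne_zero hw (i := 1) (by omega)
            omega
          · intro j hj hjn
            lift j to ℕ using (by omega : (0:ℤ) ≤ j) with jn
            have h2 := hdesc jn (by exact_mod_cast hj) (by exact_mod_cast hjn)
            have h3 : w (jn:ℤ) ≠ w ((jn:ℤ)+1) := by
              intro heq
              have := w.injective heq
              omega
            omega

lemma LB_le_length (n : ℕ) (hn : 1 ≤ n) (l : List (Equiv.Perm ℤ))
    (hl : ∀ g ∈ l, (∃ j : ℕ, 1 ≤ j ∧ j < n ∧ g = sgen j) ∨ g = tgen 1) :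
    l.prod ∈ Wgrp n ∧ LBfun n l.prod ≤ l.length := by
  induction l using List.reverseRecOn with
  | nil => simpa using ⟨Wgrp.one, LB_one n⟩
  | append_singleton l g ih =>
    obtain ⟨hmem, hlen⟩ := ih (fun g hg => hl g (by simp [hg]))
    have hg := hl g (by simp)
    rw [List.prod_append, List.prod_singleton, List.length_append, List.length_singleton]
    rcases hg with ⟨j, hj, hjn, rfl⟩ | rfl
    · refine ⟨Wgrp.mul_sgen hmem hj hjn, ?_⟩
      have hne : l.prod (j:ℤ) ≠ l.prod ((j:ℤ)+1) := by
        intro heq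
        have := l.prod.injective heq
        omega
      rcases lt_or_gt_of_ne hne with hc | hc
      · have := LB_sgen_asc n j hj hjn l.prod hc
        omega
      · have := LB_sgen_desc n j hj hjn l.prod hc
        omega
    · refine ⟨Wgrp.mul_tgen hmem hn, ?_⟩
      have hne : l.prod 1 ≠ 0 := Wgrp.ne_zero hmem (by omega)
      rcases lt_or_gt_of_ne hne with hc | hc
      · have := LB_t1_neg n hn l.prod hmem.1 hc
        omega
      · have := LB_t1_pos n hn l.prod hmem.1 hc
        omega

lemma lenB_eq_LB (n : ℕ) (hn : 1 ≤ n) (w : Equiv.Perm ℤ) (hw : w ∈ Wgrp n) :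
    lenB n w = LBfun n w := by
  obtain ⟨l, hlen, hval, hprod⟩ := exists_word n hn (LBfun n w) w hw rfl
  apply le_antisymm
  · exact Nat.sInf_le ⟨l, hlen, hval, hprod⟩
  · refine le_csInf ⟨LBfun n w, l, hlen, hval, hprod⟩ ?_
    rintro m ⟨l', hlen', hval', hprod'⟩
    have := (LB_le_length n hn l' hval').2
    rw [hprod'] at this
    omega

lemma InTauS_iff (n k : ℕ) (hk : 1 ≤ k) (hkn : k < n) (w : Equiv.Perm ℤ)
    (hw : w ∈ Wgrp n) : InTauS n k w ↔ w ((k:ℤ)+1) < w (k:ℤ) := by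
  have hn : 1 ≤ n := by omega
  rw [InTauS, lenB_eq_LB n hn _ (Wgrp.mul_sgen hw hk hkn), lenB_eq_LB n hn w hw]
  have hne : w (k:ℤ) ≠ w ((k:ℤ)+1) := by
    intro heq
    have := w.injective heq
    omega
  rcases lt_or_gt_of_ne hne with hc | hc
  · have := LB_sgen_asc n k hk hkn w hc
    constructor
    · intro h; omega
    · intro h; omega
  · have := LB_sgen_desc n k hk hkn w hc
    constructor
    · intro _; exact hc
    · intro _; omega

lemma InTauT_iff (n k : ℕ) (hk : 1 ≤ k) (hkn : k ≤ n) (w : Equiv.Perm ℤ)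
    (hw : w ∈ Wgrp n) : InTauT n k w ↔ w (k:ℤ) < 0 := by
  have hn : 1 ≤ n := by omega
  rw [InTauT, lenB_eq_LB n hn _ (Wgrp.mul_tgen hw hkn), lenB_eq_LB n hn w hw]
  have hne : w (k:ℤ) ≠ 0 := Wgrp.ne_zero hw (by omega)
  rcases lt_or_gt_of_ne hne with hc | hc
  · have := LB_tgen_gt n k hk hkn w hw.1 hc
    constructor
    · intro _; exact hc
    · intro _; omega
  · have := LB_tgen_lt n k hk hkn w hw.1 hc
    constructor
    · intro h; omega
    · intro h; omega

/-- `w` lies in the domain `D^k_{IN}(W_n)` of `T^k_{IN}` — i.e. for some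
`{δ,β} = {α_{k+1}, α'_k}`, `w ∈ D^k_{δβ}` and `w s_k ∈ D^k_{βδ}` — if and only
if `w(k)` and `w(k+1)` have opposite signs. -/
theorem mem_D_IN_iff (n k : ℕ) (hk1 : 1 ≤ k) (hk2 : k < n)
    (w : Equiv.Perm ℤ) (hw : w ∈ Wgrp n) :
    ((¬ InTauS n k w ∧ InTauT n k w ∧
        ¬ InTauT n k (w * sgen k) ∧ InTauS n k (w * sgen k)) ∨
     (InTauS n k w ∧ ¬ InTauT n k w ∧
        ¬ InTauS n k (w * sgen k) ∧ InTauT n k (w * sgen k))) ↔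
      w (k : ℤ) * w ((k : ℤ) + 1) < 0 := by
  have hw' : w * sgen k ∈ Wgrp n := Wgrp.mul_sgen hw hk1 hk2
  have h1 := InTauS_iff n k hk1 hk2 w hw
  have h2 := InTauT_iff n k hk1 (le_of_lt hk2) w hw
  have h3 := InTauS_iff n k hk1 hk2 (w * sgen k) hw'
  have h4 := InTauT_iff n k hk1 (le_of_lt hk2) (w * sgen k) hw'
  rw [mul_sgen_left k hk1, mul_sgen_right k hk1] at h3
  rw [mul_sgen_left k hk1] at h4
  have hne : w (k:ℤ) ≠ w ((k:ℤ)+1) := by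
    intro heq
    have := w.injective heq
    omega
  have hne1 : w (k:ℤ) ≠ 0 := Wgrp.ne_zero hw (by omega)
  have hne2 : w ((k:ℤ)+1) ≠ 0 := Wgrp.ne_zero hw (by omega)
  rw [h1, h2, h3, h4, mul_neg_iff]
  omega
end
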